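/- arXiv:2307.03527 — 4 statements merged into one kernel-verified Lean document; each statement's English description precedes it below -/
import Mathlib

section
/- Let n ≥ 2 be an integer. If C > 0 is a constant such that (∫_{ℝ^n} |f|^{n/(n-1)} dx)^{(n-1)/n} ≤ C ∫_{ℝ^n} |∇f| dx holds for every smooth compactly supported function f : ℝ^n → ℝ, then C ≥ n^{-1} ω_n^{-1/n}. -/
open Real MeasureTheory Filter Topology

set_option maxHeartbeats 1000000

/-- The volume of the unit ball in `ℝ^n`: `ω_n = π^(n/2) / Γ(n/2 + 1)`. -/
noncomputable def ballVol (n : ℕ) : ℝ := Real.pi ^ ((n : ℝ) / 2) / Real.Gamma ((n : ℝ) / 2 + 1)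

private lemma expNegInvGlue_monotone : Monotone expNegInvGlue := by
  intro x y hxy
  unfold expNegInvGlue
  split_ifs with h1 h2 h2
  · exact le_refl 0
  · exact (Real.exp_pos _).le
  · linarith
  · have hx : 0 < x := not_le.1 h1
    have : y⁻¹ ≤ x⁻¹ := by
      apply inv_anti₀ hx hxy
    exact Real.exp_le_exp.2 (by linarith)

private lemma smoothTransition_monotone : Monotone Real.smoothTransition := by
  intro x y hxy
  unfold Real.smoothTransition
  rw [div_le_div_iff₀ (Real.smoothTransition.pos_denom x) (Real.smoothTransition.pos_denom y)]
  have h1 : expNegInvGlue x ≤ expNegInvGlue y := expNegInvGlue_monotone hxy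
  have h2 : expNegInvGlue (1 - y) ≤ expNegInvGlue (1 - x) :=
    expNegInvGlue_monotone (by linarith)
  have h3 : 0 ≤ expNegInvGlue x := expNegInvGlue.nonneg x
  have h4 : 0 ≤ expNegInvGlue (1 - y) := expNegInvGlue.nonneg _
  nlinarith

private lemma deriv_smoothTransition_nonneg (u : ℝ) : 0 ≤ deriv Real.smoothTransition u := by
  have hd : HasDerivAt Real.smoothTransition (deriv Real.smoothTransition u) u :=
    ((Real.smoothTransition.contDiff (n := 1)).differentiable (by simp) u).hasDerivAt
  rw [hasDerivAt_iff_tendsto_slope] at hd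
  have hsub : Set.Ioi u ⊆ {u}ᶜ := fun y hy => ne_of_gt hy
  refine ge_of_tendsto (hd.mono_left (nhdsWithin_mono u hsub)) ?_
  filter_upwards [self_mem_nhdsWithin] with y hy
  have hy' : u < y := hy
  rw [slope_def_field]
  exact div_nonneg (sub_nonneg.2 (smoothTransition_monotone hy'.le)) (by linarith)

private lemma deriv_smoothTransition_neg {u : ℝ} (hu : u < 0) :
    deriv Real.smoothTransition u = 0 := by
  have h : Real.smoothTransition =ᶠ[𝓝 u] fun _ => (0 : ℝ) := by
    filter_upwards [Iio_mem_nhds hu] with y hy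
    exact Real.smoothTransition.zero_of_nonpos hy.le
  rw [h.deriv_eq, deriv_const]

private lemma deriv_smoothTransition_gt {u : ℝ} (hu : 1 < u) :
    deriv Real.smoothTransition u = 0 := by
  have h : Real.smoothTransition =ᶠ[𝓝 u] fun _ => (1 : ℝ) := by
    filter_upwards [Ioi_mem_nhds hu] with y hy
    exact Real.smoothTransition.one_of_one_le hy.le
  rw [h.deriv_eq, deriv_const]

/-- Sharpness of the constant in the `L^1`-Sobolev inequality in `ℝ^n`. -/
theorem sharp_L1_sobolev_euclidean_sharpness (n : ℕ) (hn : 2 ≤ n) (C : ℝ) (hC : 0 < C)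
    (hineq : ∀ f : EuclideanSpace ℝ (Fin n) → ℝ, ContDiff ℝ (⊤ : ℕ∞) f → HasCompactSupport f →
      (∫ x : EuclideanSpace ℝ (Fin n), |f x| ^ ((n : ℝ) / ((n : ℝ) - 1))) ^
          (((n : ℝ) - 1) / n) ≤
        C * ∫ x : EuclideanSpace ℝ (Fin n), ‖fderiv ℝ f x‖) :
    (n : ℝ)⁻¹ * ballVol n ^ (-(1 : ℝ) / n) ≤ C := by
  classical
  haveI : Nonempty (Fin n) := Fin.pos_iff_nonempty.1 (by omega)
  set E := EuclideanSpace ℝ (Fin n) with hE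
  haveI : Nontrivial E := Module.nontrivial_of_finrank_pos (R := ℝ)
    (by rw [finrank_euclideanSpace_fin]; omega)
  set ω : ℝ := (volume (Metric.ball (0 : E) 1)).toReal with hωdef
  have hωpos : 0 < ω := by
    rw [hωdef]
    refine ENNReal.toReal_pos (by
      simpa using (Metric.measure_ball_pos volume (0 : E) one_pos).ne') ?_
    exact measure_ball_lt_top.ne
  have hn1 : (1 : ℝ) ≤ (n : ℝ) - 1 := by
    have : (2 : ℝ) ≤ (n : ℝ) := by exact_mod_cast hn
    linarith
  have hnpos : (0 : ℝ) < n := by positivity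
  set q : ℝ := ((n : ℝ) - 1) / n with hqdef
  have hqpos : 0 < q := by positivity
  set p : ℝ := (n : ℝ) / ((n : ℝ) - 1) with hpdef
  have hppos : 0 < p := by positivity
  -- Key estimate for each ε > 0
  have key : ∀ ε : ℝ, 0 < ε → ω ^ q ≤ C * ((n : ℝ) * ω * (1 + ε) ^ (n - 1)) := by
    intro ε hε
    set a : ℝ := 1 + ε with hadef
    have ha1 : 1 < a := by simp [hadef, hε]
    set T : ℝ → ℝ := Real.smoothTransition with hT
    set f : E → ℝ := fun x => T ((a - ‖x‖) / ε) with hfdef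
    set g : ℝ → ℝ := fun r => ε⁻¹ * deriv T ((a - r) / ε) with hgdef
    have hgnonneg : ∀ r, 0 ≤ g r := fun r =>
      mul_nonneg (by positivity) (deriv_smoothTransition_nonneg _)
    have hgzero_gt : ∀ r : ℝ, a < r → g r = 0 := by
      intro r hr
      have : (a - r) / ε < 0 := div_neg_of_neg_of_pos (by linarith) hε
      simp [hgdef, hT, deriv_smoothTransition_neg this]
    have hgzero_lt : ∀ r : ℝ, r < 1 → g r = 0 := by
      intro r hr
      have : 1 < (a - r) / ε := by
        rw [lt_div_iff₀ hε]; simp [hadef]; linarith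
      simp [hgdef, hT, deriv_smoothTransition_gt this]
    have hgcont : Continuous g := by
      apply continuous_const.mul
      exact ((Real.smoothTransition.contDiff (n := (⊤ : ℕ∞))).continuous_deriv (by exact_mod_cast le_top)).comp
        (by continuity)
    have hgsupp : Function.support g ⊆ Set.Icc 1 a := by
      intro r hr
      by_contra hmem
      rcases not_and_or.1 (Set.mem_Icc.not.1 hmem) with h | h
      · exact hr (hgzero_lt r (not_le.1 h))
      · exact hr (hgzero_gt r (not_le.1 h))
    have hgcs : HasCompactSupport g := HasCompactSupport.intro isCompact_Icc
      (fun r hr => Function.notMem_support.1 (fun hs => hr (hgsupp hs)))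
    -- f equals 1 on the unit ball
    have hfone : ∀ x : E, ‖x‖ ≤ 1 → f x = 1 := by
      intro x hx
      apply Real.smoothTransition.one_of_one_le
      rw [le_div_iff₀ hε]
      simp [hadef]; linarith
    -- f vanishes outside the ball of radius a
    have hfzero : ∀ x : E, a < ‖x‖ → f x = 0 := by
      intro x hx
      apply Real.smoothTransition.zero_of_nonpos
      apply div_nonpos_of_nonpos_of_nonneg (by linarith) hε.le
    -- smoothness
    have hfsmooth : ContDiff ℝ (⊤ : ℕ∞) f := by
      rw [contDiff_iff_contDiffAt]
      intro x
      by_cases hx : x = 0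
      · subst hx
        apply ContDiffAt.congr_of_eventuallyEq (contDiffAt_const (c := (1 : ℝ)))
        filter_upwards [Metric.ball_mem_nhds (0 : E) one_pos] with y hy
        exact hfone y (mem_ball_zero_iff.1 hy).le
      · exact Real.smoothTransition.contDiffAt.comp x
          ((contDiffAt_const.sub (contDiffAt_norm ℝ hx)).div_const ε)
    have hfcs : HasCompactSupport f := by
      apply HasCompactSupport.intro (isCompact_closedBall (0 : E) a)
      intro x hx
      apply hfzero
      simpa [dist_zero_right] using hx
    -- pointwise gradient bound
    have hgrad : ∀ x : E, ‖fderiv ℝ f x‖ ≤ g ‖x‖ := by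
      intro x
      by_cases hx : x = 0
      · subst hx
        have : f =ᶠ[𝓝 (0 : E)] fun _ => (1 : ℝ) := by
          filter_upwards [Metric.ball_mem_nhds (0 : E) one_pos] with y hy
          exact hfone y (mem_ball_zero_iff.1 hy).le
        rw [this.fderiv_eq, fderiv_fun_const]
        simpa using hgnonneg ‖(0 : E)‖
      · set u : E → ℝ := fun y => (a - ‖y‖) / ε with hu
        have hlip : LipschitzWith (ε⁻¹).toNNReal u := by
          apply LipschitzWith.of_dist_le_mul
          intro y z
          have h1 : u y - u z = (‖z‖ - ‖y‖) / ε := by rw [hu]; ring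
          rw [Real.dist_eq, h1, abs_div, abs_of_pos hε, Real.coe_toNNReal _ (by positivity)]
          have hz : |‖z‖ - ‖y‖| ≤ dist y z := by
            rw [dist_eq_norm, norm_sub_rev]; exact abs_norm_sub_norm_le z y
          calc |‖z‖ - ‖y‖| / ε ≤ dist y z / ε := by gcongr
            _ = ε⁻¹ * dist y z := by ring
        have hud : DifferentiableAt ℝ u x :=
          (((contDiffAt_const.sub (contDiffAt_norm ℝ hx (n := 1))).div_const ε)).differentiableAt (by simp)
        have hTd : HasDerivAt T (deriv T (u x)) (u x) :=
          (((Real.smoothTransition.contDiff (n := 1)).differentiable (by simp)) (u x)).hasDerivAt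
        have hF : HasFDerivAt f (deriv T (u x) • fderiv ℝ u x) x :=
          hTd.comp_hasFDerivAt x hud.hasFDerivAt
        rw [hF.fderiv, norm_smul]
        have h1 : ‖fderiv ℝ u x‖ ≤ ε⁻¹ := by
          have := norm_fderiv_le_of_lipschitz ℝ hlip (x₀ := x)
          rwa [Real.coe_toNNReal _ (by positivity)] at this
        have h2 : 0 ≤ deriv T (u x) := deriv_smoothTransition_nonneg _
        calc ‖deriv T (u x)‖ * ‖fderiv ℝ u x‖
            ≤ deriv T (u x) * ε⁻¹ := by
              rw [Real.norm_eq_abs, abs_of_nonneg h2]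
              exact mul_le_mul_of_nonneg_left h1 h2
          _ = g ‖x‖ := by rw [hgdef, mul_comm]
    -- apply the hypothesis
    have happ := hineq f hfsmooth hfcs
    -- lower bound for the LHS integral
    have hfcont : Continuous f := hfsmooth.continuous
    have hintp : Integrable (fun x : E => |f x| ^ p) := by
      apply Continuous.integrable_of_hasCompactSupport
      · exact (hfcont.abs).rpow_const (fun x => Or.inr hppos.le)
      · show HasCompactSupport ((fun t : ℝ => |t| ^ p) ∘ f)
        exact hfcs.comp_left (by simp [Real.zero_rpow hppos.ne'])
    have hlower : ω ≤ ∫ x : E, |f x| ^ p := by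
      have h1 : ω = ∫ _ in Metric.ball (0 : E) 1, (1 : ℝ) := by
        rw [setIntegral_const, smul_eq_mul, mul_one, measureReal_def]
      have h2 : ∫ _ in Metric.ball (0 : E) 1, (1 : ℝ)
          = ∫ x in Metric.ball (0 : E) 1, |f x| ^ p := by
        apply setIntegral_congr_fun measurableSet_ball
        intro x hx
        have hx1 : f x = 1 := hfone x (mem_ball_zero_iff.1 hx).le
        simp only [hx1, abs_one, Real.one_rpow]
      rw [h1, h2]
      exact setIntegral_le_integral hintp
        (Filter.Eventually.of_forall (fun x => Real.rpow_nonneg (abs_nonneg _) _))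
    -- upper bound for the gradient integral
    have hderivcont : Continuous fun x : E => ‖fderiv ℝ f x‖ :=
      (hfsmooth.continuous_fderiv (by simp)).norm
    have hderivint : Integrable (fun x : E => ‖fderiv ℝ f x‖) :=
      hderivcont.integrable_of_hasCompactSupport ((hfcs.fderiv ℝ).norm)
    have hgcompint : Integrable (fun x : E => g ‖x‖) :=
      (hgcont.comp continuous_norm).integrable_of_hasCompactSupport
        (by
          apply HasCompactSupport.intro (isCompact_closedBall (0 : E) a)
          intro x hx
          exact hgzero_gt _ (by simpa [dist_zero_right] using hx))
    have hmono : ∫ x : E, ‖fderiv ℝ f x‖ ≤ ∫ x : E, g ‖x‖ :=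
      integral_mono hderivint hgcompint hgrad
    -- polar coordinates
    have hdim : Module.finrank ℝ E = n := finrank_euclideanSpace_fin
    have hpolar := integral_fun_norm_addHaar (volume : Measure E) g
    rw [hdim] at hpolar
    simp only [smul_eq_mul, nsmul_eq_mul] at hpolar
    -- compute ∫ g over (0, ∞)
    have hIoi : ∫ r in Set.Ioi (0 : ℝ), g r = 1 := by
      have h1 : ∫ r in Set.Ioi (0 : ℝ), g r = ∫ r : ℝ, g r := by
        apply setIntegral_eq_integral_of_forall_compl_eq_zero
        intro r hr
        exact hgzero_lt r (by simpa using lt_of_le_of_lt (not_lt.1 (by simpa using hr)) one_pos)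
      have h2 : ∫ r : ℝ, g r = ∫ r in Set.Icc (1 : ℝ) a, g r := by
        symm
        apply setIntegral_eq_integral_of_forall_compl_eq_zero
        intro r hr
        rcases not_and_or.1 (Set.mem_Icc.not.1 hr) with h | h
        · exact hgzero_lt r (not_le.1 h)
        · exact hgzero_gt r (not_le.1 h)
      have h3 : ∫ r in Set.Icc (1 : ℝ) a, g r = ∫ r in (1 : ℝ)..a, g r := by
        rw [integral_Icc_eq_integral_Ioc, intervalIntegral.integral_of_le ha1.le]
      set F : ℝ → ℝ := fun r => -T ((a - r) / ε) with hF
      have h4 : ∫ r in (1 : ℝ)..a, g r = F a - F 1 := by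
        apply intervalIntegral.integral_eq_sub_of_hasDerivAt
        · intro r _
          have hi : HasDerivAt (fun r : ℝ => (a - r) / ε) (-1 / ε) r := by
            simpa using ((hasDerivAt_id r).const_sub a).div_const ε
          have hTd : HasDerivAt T (deriv T ((a - r) / ε)) ((a - r) / ε) :=
            (((Real.smoothTransition.contDiff (n := 1)).differentiable (by simp)) _).hasDerivAt
          have := (hTd.comp r hi).neg
          convert this using 1
          · rfl
          · rw [hgdef]; ring
        · exact (hgcont.intervalIntegrable 1 a)
      rw [h1, h2, h3, h4, hF]
      have e1 : (a - a) / ε = 0 := by simp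
      have e2 : (a - 1) / ε = 1 := by rw [div_eq_one_iff_eq hε.ne', hadef]; ring
      simp only [e1, e2, hT]
      rw [Real.smoothTransition.one, Real.smoothTransition.zero]
      ring
    -- bound the radial integral
    have hradial : ∫ r in Set.Ioi (0 : ℝ), r ^ (n - 1) * g r ≤ a ^ (n - 1) := by
      have hint1 : IntegrableOn (fun r : ℝ => r ^ (n - 1) * g r) (Set.Ioi (0 : ℝ)) := by
        apply Integrable.integrableOn
        exact ((continuous_pow _).mul hgcont).integrable_of_hasCompactSupport
          (hgcs.mul_left)
      have hint2 : IntegrableOn (fun r : ℝ => a ^ (n - 1) * g r) (Set.Ioi (0 : ℝ)) := by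
        exact (hgcont.integrable_of_hasCompactSupport hgcs).integrableOn.const_mul _
      have hb : ∫ r in Set.Ioi (0 : ℝ), r ^ (n - 1) * g r
          ≤ ∫ r in Set.Ioi (0 : ℝ), a ^ (n - 1) * g r := by
        apply setIntegral_mono_on hint1 hint2 measurableSet_Ioi
        intro r hr
        rcases le_or_gt r a with h | h
        · have : r ^ (n - 1) ≤ a ^ (n - 1) := pow_le_pow_left₀ (le_of_lt hr) h _
          exact mul_le_mul_of_nonneg_right this (hgnonneg r)
        · rw [hgzero_gt r h]
          simp
      calc ∫ r in Set.Ioi (0 : ℝ), r ^ (n - 1) * g r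
          ≤ ∫ r in Set.Ioi (0 : ℝ), a ^ (n - 1) * g r := hb
        _ = a ^ (n - 1) * ∫ r in Set.Ioi (0 : ℝ), g r := by
            simp_rw [← smul_eq_mul]
            rw [integral_smul]
        _ = a ^ (n - 1) := by rw [hIoi, mul_one]
    -- combine
    have hupper : ∫ x : E, g ‖x‖ ≤ (n : ℝ) * ω * a ^ (n - 1) := by
      rw [hpolar, measureReal_def, ← hωdef]
      calc (n : ℝ) * (ω * ∫ r in Set.Ioi (0 : ℝ), r ^ (n - 1) * g r)
          ≤ (n : ℝ) * (ω * a ^ (n - 1)) := by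
            apply mul_le_mul_of_nonneg_left _ (by positivity)
            exact mul_le_mul_of_nonneg_left hradial hωpos.le
        _ = (n : ℝ) * ω * a ^ (n - 1) := by ring
    have hq1 : ω ^ q ≤ (∫ x : E, |f x| ^ p) ^ q :=
      Real.rpow_le_rpow hωpos.le hlower hqpos.le
    calc ω ^ q ≤ (∫ x : E, |f x| ^ p) ^ q := hq1
      _ ≤ C * ∫ x : E, ‖fderiv ℝ f x‖ := happ
      _ ≤ C * ∫ x : E, g ‖x‖ := by
          exact mul_le_mul_of_nonneg_left hmono hC.le
      _ ≤ C * ((n : ℝ) * ω * a ^ (n - 1)) := mul_le_mul_of_nonneg_left hupper hC.le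
  -- take the limit ε → 0⁺
  have hlim : ω ^ q ≤ C * ((n : ℝ) * ω) := by
    have htend : Tendsto (fun ε : ℝ => C * ((n : ℝ) * ω * (1 + ε) ^ (n - 1)))
        (𝓝[>] (0 : ℝ)) (𝓝 (C * ((n : ℝ) * ω))) := by
      have hcont : Continuous (fun ε : ℝ => C * ((n : ℝ) * ω * (1 + ε) ^ (n - 1))) := by
        continuity
      have := hcont.tendsto 0
      simp only [add_zero, one_pow, mul_one] at this
      exact this.mono_left nhdsWithin_le_nhds
    refine ge_of_tendsto htend ?_
    filter_upwards [self_mem_nhdsWithin] with ε hε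
    exact key ε hε
  -- identify ω with ballVol n
  have hω : ω = ballVol n := by
    have hball : volume (Metric.ball (0 : E) 1) = (ENNReal.ofReal 1) ^ (Fintype.card (Fin n)) *
        ENNReal.ofReal (Real.sqrt π ^ (Fintype.card (Fin n)) /
          Real.Gamma ((Fintype.card (Fin n)) / 2 + 1)) :=
      EuclideanSpace.volume_ball (Fin n) 0 1
    rw [hωdef, hball, Fintype.card_fin]
    have hΓpos : 0 < Real.Gamma ((n : ℝ) / 2 + 1) := Real.Gamma_pos_of_pos (by positivity)
    rw [ENNReal.toReal_mul, ENNReal.toReal_pow, ENNReal.toReal_ofReal one_pos.le, one_pow, one_mul,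
      ENNReal.toReal_ofReal (by positivity)]
    unfold ballVol
    congr 1
    rw [Real.sqrt_eq_rpow, ← Real.rpow_natCast (Real.pi ^ ((1 : ℝ)/2)) n,
      ← Real.rpow_mul Real.pi_pos.le]
    congr 1
    ring
  -- final algebra
  have hfinal : ω ^ q / ((n : ℝ) * ω) ≤ C := by
    rw [div_le_iff₀ (by positivity)]
    linarith [hlim]
  have heq : (n : ℝ)⁻¹ * ballVol n ^ (-(1 : ℝ) / n) = ω ^ q / ((n : ℝ) * ω) := by
    rw [← hω]
    have h1 : (-(1 : ℝ) / n) = q - 1 := by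
      rw [hqdef]
      field_simp
      ring
    rw [h1, Real.rpow_sub hωpos, Real.rpow_one]
    field_simp
  rw [heq]
  exact hfinal
end

section
/- Let n ≥ 2 be an integer, p ∈ (1,n), p' = p/(p-1), and s > n/p'. Let ν be a Borel measure on [0,∞) such that the function ρ ↦ ν([0,ρ])/ρ^n is nonincreasing on (0,∞) and bounded above by ω_n, and let θ = lim_{ρ→∞} ν([0,ρ])/ρ^n. Then lim_{λ→∞} λ^{s - n/p'} ∫_{[0,∞)} (λ + ρ^{p'})^{-s} dν(ρ) = θ · Γ(n/p' + 1) Γ(s - n/p') / Γ(s). -/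
open Real MeasureTheory Filter Topology

open Set
open scoped ENNReal NNReal

-- Lemma 1: real Beta integral
theorem myBeta (a b : ℝ) (ha : 0 < a) (hb : 0 < b) :
    ∫ x in (0:ℝ)..1, x ^ (a-1) * (1-x) ^ (b-1) = Real.Gamma a * Real.Gamma b / Real.Gamma (a+b) := by
  have key := Complex.Gamma_mul_Gamma_eq_betaIntegral (s := (a:ℂ)) (t := (b:ℂ)) (by simpa using ha) (by simpa using hb)
  have h1 : Complex.betaIntegral a b = ((∫ x in (0:ℝ)..1, x ^ (a-1) * (1-x) ^ (b-1) : ℝ) : ℂ) := by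
    rw [Complex.betaIntegral, ← intervalIntegral.integral_ofReal]
    apply intervalIntegral.integral_congr
    intro x hx
    rw [Set.uIcc_of_le (by norm_num : (0:ℝ) ≤ 1)] at hx
    have hx0 : 0 ≤ x := hx.1
    have hx1 : 0 ≤ 1 - x := by linarith [hx.2]
    simp only []
    rw [Complex.ofReal_mul, Complex.ofReal_cpow hx0, Complex.ofReal_cpow hx1]
    push_cast
    ring
  rw [h1] at key
  have hGab : Real.Gamma (a+b) ≠ 0 := (Real.Gamma_pos_of_pos (by linarith)).ne'
  have key2 : Real.Gamma a * Real.Gamma b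
      = Real.Gamma (a+b) * ∫ x in (0:ℝ)..1, x ^ (a-1) * (1-x) ^ (b-1) := by
    have := key
    rw [← Complex.ofReal_add, Complex.Gamma_ofReal, Complex.Gamma_ofReal, Complex.Gamma_ofReal] at this
    exact_mod_cast this
  rw [key2]
  field_simp

theorem myBetaIoi (q s : ℝ) (hq : -1 < q) (hqs : q < s) :
    ∫ v in Set.Ioi (0:ℝ), v ^ q * (1+v) ^ (-s-1)
      = Real.Gamma (q+1) * Real.Gamma (s-q) / Real.Gamma (s+1) := by
  have himg : (fun x : ℝ => x / (1-x)) '' Set.Ioo 0 1 = Set.Ioi 0 := by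
    ext v
    constructor
    · rintro ⟨x, hx, rfl⟩
      exact div_pos hx.1 (by linarith [hx.2])
    · intro hv
      simp only [Set.mem_Ioi] at hv
      have h1v : (1:ℝ) + v ≠ 0 := by positivity
      refine ⟨v / (1+v), ⟨div_pos hv (by linarith), ?_⟩, ?_⟩
      · rw [div_lt_one (by linarith)]; linarith
      · have e1 : 1 - v/(1+v) = 1/(1+v) := by field_simp; ring
        simp only [e1]
        rw [div_div_div_cancel_right₀]
        · simp
        · simpa using h1v
  have hderiv : ∀ x ∈ Set.Ioo (0:ℝ) 1, HasDerivWithinAt (fun x : ℝ => x / (1-x))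
      (((1-x)^2)⁻¹) (Set.Ioo 0 1) x := by
    intro x hx
    have h1 : (1:ℝ) - x ≠ 0 := by have := hx.2; intro h; linarith [sub_eq_zero.mp h]
    have := (hasDerivAt_id x).div ((hasDerivAt_id x).const_sub 1) h1
    refine this.hasDerivWithinAt.congr_deriv ?_
    simp only [id, one_mul, mul_neg, mul_one, sub_neg_eq_add, sub_add_cancel, one_div]
  have hinj : Set.InjOn (fun x : ℝ => x / (1-x)) (Set.Ioo 0 1) := by
    intro x hx y hy h
    simp only at h
    have h1 : (1:ℝ) - x ≠ 0 := by have := hx.2; intro h; linarith [sub_eq_zero.mp h]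
    have h2 : (1:ℝ) - y ≠ 0 := by have := hy.2; intro h; linarith [sub_eq_zero.mp h]
    field_simp at h
    linarith
  rw [← himg, integral_image_eq_integral_abs_deriv_smul measurableSet_Ioo hderiv hinj]
  have hcongr : ∀ x ∈ Set.Ioo (0:ℝ) 1,
      |((1-x)^2)⁻¹| • ((x/(1-x)) ^ q * (1 + x/(1-x)) ^ (-s-1))
        = x ^ q * (1-x) ^ (s-q-1) := by
    intro x hx
    have hx0 : (0:ℝ) < x := hx.1
    have ht : (0:ℝ) < 1 - x := by linarith [hx.2]
    have h1 : (1:ℝ) + x/(1-x) = (1-x)⁻¹ := by field_simp; ring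
    have e2 : ((1-x)^2)⁻¹ = (1-x)^(-2:ℝ) := by
      rw [← Real.rpow_natCast (1-x) 2, ← Real.rpow_neg ht.le]
      norm_num
    have e3 : ((1-x)⁻¹) ^ (-s-1) = (1-x) ^ (s+1) := by
      rw [Real.inv_rpow ht.le, ← Real.rpow_neg ht.le]
      ring_nf
    have e4 : (x/(1-x)) ^ q = x^q * (1-x)^(-q) := by
      rw [Real.div_rpow hx0.le ht.le, Real.rpow_neg ht.le, div_eq_mul_inv]
    have e5 : (1-x)^(-2:ℝ) * ((1-x)^(-q) * (1-x)^(s+1)) = (1-x)^(s-q-1) := by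
      rw [← Real.rpow_add ht, ← Real.rpow_add ht]
      norm_num
      ring_nf
    rw [h1, e2, e3, e4, abs_of_pos (Real.rpow_pos_of_pos ht _), smul_eq_mul, ← e5]
    ring
  rw [setIntegral_congr_fun measurableSet_Ioo hcongr, ← integral_Ioc_eq_integral_Ioo,
    ← intervalIntegral.integral_of_le (by norm_num : (0:ℝ) ≤ 1)]
  have := myBeta (q+1) (s-q) (by linarith) (by linarith)
  simp only [add_sub_cancel_right] at this
  rw [show q + 1 + (s - q) = s + 1 by ring] at this
  rw [← this]

theorem boundMeasurable (q s : ℝ) : Measurable (fun v : ℝ => v ^ q * (1+v) ^ (-s-1)) := by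
  fun_prop

theorem boundIntegrable (q s : ℝ) (hq : -1 < q) (hqs : q < s) :
    IntegrableOn (fun v : ℝ => v ^ q * (1+v) ^ (-s-1)) (Set.Ioi 0) := by
  have meas := boundMeasurable q s
  rw [show Set.Ioi (0:ℝ) = Set.Ioc 0 1 ∪ Set.Ioi 1 from (Set.Ioc_union_Ioi_eq_Ioi (by norm_num)).symm]
  apply IntegrableOn.union
  · have h1 : IntegrableOn (fun v : ℝ => v ^ q) (Set.Ioc (0:ℝ) 1) := by
      have := intervalIntegral.intervalIntegrable_rpow' (a := (0:ℝ)) (b := 1) hq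
      rwa [intervalIntegrable_iff_integrableOn_Ioc_of_le (by norm_num)] at this
    apply h1.mono' meas.aestronglyMeasurable.restrict
    filter_upwards [ae_restrict_mem measurableSet_Ioc] with v hv
    have hv0 : 0 < v := hv.1
    have h1v : (1:ℝ) ≤ 1 + v := by linarith
    rw [Real.norm_eq_abs, abs_of_nonneg (by positivity)]
    calc v ^ q * (1+v) ^ (-s-1) ≤ v ^ q * 1 := by
          apply mul_le_mul_of_nonneg_left _ (by positivity)
          exact Real.rpow_le_one_of_one_le_of_nonpos h1v (by linarith)
      _ = v ^ q := mul_one _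
  · have h2 : IntegrableOn (fun v : ℝ => v ^ (q-s-1)) (Set.Ioi (1:ℝ)) :=
      integrableOn_Ioi_rpow_of_lt (by linarith) one_pos
    apply h2.mono' meas.aestronglyMeasurable.restrict
    filter_upwards [ae_restrict_mem measurableSet_Ioi] with v hv
    simp only [Set.mem_Ioi] at hv
    have hv0 : (0:ℝ) < v := by linarith
    rw [Real.norm_eq_abs, abs_of_nonneg (by positivity)]
    calc v ^ q * (1+v) ^ (-s-1) ≤ v ^ q * v ^ (-s-1) := by
          apply mul_le_mul_of_nonneg_left _ (by positivity)
          exact Real.rpow_le_rpow_of_nonpos hv0 (by linarith) (by linarith)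
      _ = v ^ (q-s-1) := by rw [← Real.rpow_add hv0]; ring_nf

theorem ftcDeriv {lam s : ℝ} (hlam : 0 < lam) (hs : 0 < s) {u : ℝ} (hu : 0 < lam + u) :
    HasDerivAt (fun u : ℝ => -((lam+u) ^ (-s))) (s * (lam+u) ^ (-s-1)) u := by
  have h1 : HasDerivAt (fun u : ℝ => lam + u) 1 u := (hasDerivAt_id u).const_add lam
  have h2 := (h1.rpow_const (p := -s) (Or.inl hu.ne')).neg
  exact h2.congr_deriv (by ring)

theorem ftcIoi {lam x s : ℝ} (hlam : 0 < lam) (hx : 0 ≤ x) (hs : 0 < s) :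
    ∫ u in Set.Ioi x, s * (lam+u) ^ (-s-1) = (lam+x) ^ (-s) := by
  have hcont : ContinuousWithinAt (fun u : ℝ => -((lam+u) ^ (-s))) (Set.Ici x) x :=
    (ftcDeriv hlam hs (by linarith)).continuousAt.continuousWithinAt
  have htend : Tendsto (fun u : ℝ => -((lam+u) ^ (-s))) atTop (𝓝 0) := by
    rw [show (0:ℝ) = -0 by norm_num]
    exact (((tendsto_rpow_neg_atTop hs).comp (tendsto_atTop_add_const_left _ lam tendsto_id))).neg
  have := integral_Ioi_of_hasDerivAt_of_nonneg hcont
    (fun u hu => ftcDeriv hlam hs (by have : x < u := hu; linarith))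
    (fun u hu => mul_nonneg hs.le (Real.rpow_nonneg (by
      simp only [Set.mem_Ioi] at hu; linarith) _)) htend
  rw [this]
  ring

theorem ftcIntegrable {lam x s : ℝ} (hlam : 0 < lam) (hx : 0 ≤ x) (hs : 0 < s) :
    IntegrableOn (fun u : ℝ => s * (lam+u) ^ (-s-1)) (Set.Ioi x) := by
  have hcont : ContinuousWithinAt (fun u : ℝ => -((lam+u) ^ (-s))) (Set.Ici x) x :=
    (ftcDeriv hlam hs (by linarith)).continuousAt.continuousWithinAt
  have htend : Tendsto (fun u : ℝ => -((lam+u) ^ (-s))) atTop (𝓝 0) := by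
    rw [show (0:ℝ) = -0 by norm_num]
    exact (((tendsto_rpow_neg_atTop hs).comp (tendsto_atTop_add_const_left _ lam tendsto_id))).neg
  exact integrableOn_Ioi_deriv_of_nonneg hcont
    (fun u hu => ftcDeriv hlam hs (by have : x < u := hu; linarith))
    (fun u hu => mul_nonneg hs.le (Real.rpow_nonneg (by
      simp only [Set.mem_Ioi] at hu; linarith) _)) htend

theorem fubiniStep (p' s : ℝ) (hp' : 0 < p') (hs : 0 < s) (ν : Measure ℝ)
    [SigmaFinite ν] (hνneg : ν (Set.Iio 0) = 0) (hfin : ∀ r : ℝ, ν (Set.Icc 0 r) ≠ ⊤)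
    (hFmeas : Measurable fun r : ℝ => (ν (Set.Icc 0 r)).toReal)
    {lam : ℝ} (hlam : 0 < lam) :
    ∫ ρ, (lam + ρ ^ p') ^ (-s) ∂ν
      = ∫ u in Set.Ioi (0:ℝ),
          s * (lam+u) ^ (-s-1) * (ν (Set.Icc 0 (u ^ p'⁻¹))).toReal := by
  have hae : ∀ᵐ ρ ∂ν, 0 ≤ ρ := by
    rw [ae_iff]
    refine measure_mono_null (fun a ha => ?_) hνneg
    simpa using not_le.mp ha
  set k : ℝ → ℝ≥0∞ := fun u => ENNReal.ofReal (s * (lam+u) ^ (-s-1)) with hk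
  have hkmeas : Measurable k := by fun_prop
  set S : Set (ℝ × ℝ) := {z : ℝ × ℝ | z.1 ^ p' ≤ z.2} with hS
  have hSmeas : MeasurableSet S := measurableSet_le (by fun_prop) measurable_snd
  set f : ℝ → ℝ → ℝ≥0∞ := fun ρ u => k u * S.indicator 1 (ρ, u) with hf
  -- LHS as a lintegral
  have L1 : ∫ ρ, (lam + ρ ^ p') ^ (-s) ∂ν
      = (∫⁻ ρ, ENNReal.ofReal ((lam + ρ ^ p') ^ (-s)) ∂ν).toReal := by
    apply integral_eq_lintegral_of_nonneg_ae
    · filter_upwards [hae] with ρ hρ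
      have : 0 ≤ lam + ρ ^ p' := by
        have := Real.rpow_nonneg hρ p'; linarith
      exact Real.rpow_nonneg this _
    · exact (by fun_prop : Measurable fun ρ : ℝ => (lam + ρ ^ p') ^ (-s)).aestronglyMeasurable
  -- inner identity
  have L2 : ∫⁻ ρ, ENNReal.ofReal ((lam + ρ ^ p') ^ (-s)) ∂ν
      = ∫⁻ ρ, (∫⁻ u in Set.Ioi (0:ℝ), f ρ u) ∂ν := by
    apply lintegral_congr_ae
    filter_upwards [hae] with ρ hρ
    have hx : 0 ≤ ρ ^ p' := Real.rpow_nonneg hρ _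
    have e1 : (fun u => f ρ u) = (Set.Ici (ρ ^ p')).indicator k := by
      ext u
      by_cases h : ρ ^ p' ≤ u <;>
        simp [hf, hS, Set.indicator, Set.mem_Ici, h]
    rw [e1, lintegral_indicator measurableSet_Ici, Measure.restrict_restrict measurableSet_Ici]
    have hset : (Set.Ici (ρ ^ p') ∩ Set.Ioi 0 : Set ℝ) =ᵐ[volume] Set.Ioi (ρ ^ p') := by
      rw [MeasureTheory.ae_eq_set]
      constructor
      · refine measure_mono_null (t := {ρ ^ p'}) (fun a ha => ?_) (measure_singleton _)
        have h1 : ρ ^ p' ≤ a := ha.1.1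
        have h3 : ¬ ρ ^ p' < a := ha.2
        simp only [Set.mem_singleton_iff]
        linarith [not_lt.mp h3]
      · refine measure_mono_null (t := (∅ : Set ℝ)) (fun a ha => ?_) measure_empty
        have h1 : ρ ^ p' < a := ha.1
        exact absurd ⟨h1.le, lt_of_le_of_lt hx h1⟩ ha.2
    rw [Measure.restrict_congr_set hset]
    rw [← ftcIoi hlam hx hs,
      ofReal_integral_eq_lintegral_ofReal (ftcIntegrable hlam hx hs) ?_]
    · filter_upwards [ae_restrict_mem measurableSet_Ioi] with u hu
      simp only [Set.mem_Ioi] at hu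
      have : 0 ≤ lam + u := by linarith
      positivity
  -- swap
  have hum : Measurable (Function.uncurry f) := by
    have : Function.uncurry f = fun z : ℝ × ℝ => k z.2 * S.indicator 1 z := rfl
    rw [this]
    exact (hkmeas.comp measurable_snd).mul (measurable_one.indicator hSmeas)
  have L3 : ∫⁻ ρ, (∫⁻ u in Set.Ioi (0:ℝ), f ρ u) ∂ν
      = ∫⁻ u in Set.Ioi (0:ℝ), (∫⁻ ρ, f ρ u ∂ν) := lintegral_lintegral_swap hum.aemeasurable
  -- inner ρ-integral
  have L4 : ∀ u : ℝ, 0 < u →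
      (∫⁻ ρ, f ρ u ∂ν) = ENNReal.ofReal (s * (lam+u) ^ (-s-1) * (ν (Set.Icc 0 (u ^ p'⁻¹))).toReal) := by
    intro u hu
    have hTmeas : MeasurableSet {ρ : ℝ | ρ ^ p' ≤ u} :=
      measurableSet_le (by fun_prop) measurable_const
    have e2 : (fun ρ => f ρ u) = fun ρ => k u * ({ρ : ℝ | ρ ^ p' ≤ u}).indicator 1 ρ := by
      ext ρ
      by_cases h : ρ ^ p' ≤ u <;> simp [hf, hS, Set.indicator, h]
    rw [e2, lintegral_const_mul _ (measurable_one.indicator hTmeas), lintegral_indicator_one hTmeas]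
    have hν1 : ν {ρ : ℝ | ρ ^ p' ≤ u} = ν (Set.Icc 0 (u ^ p'⁻¹)) := by
      have sub1 : {ρ : ℝ | ρ ^ p' ≤ u} ⊆ Set.Icc 0 (u ^ p'⁻¹) ∪ Set.Iio 0 := by
        intro ρ hρ
        rcases le_or_gt 0 ρ with h0 | h0
        · left
          exact ⟨h0, (Real.le_rpow_inv_iff_of_pos h0 hu.le hp').mpr hρ⟩
        · right; exact h0
      have sub2 : Set.Icc 0 (u ^ p'⁻¹) ⊆ {ρ : ℝ | ρ ^ p' ≤ u} := by
        intro ρ hρ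
        exact (Real.le_rpow_inv_iff_of_pos hρ.1 hu.le hp').mp hρ.2
      apply le_antisymm
      · calc ν {ρ : ℝ | ρ ^ p' ≤ u} ≤ ν (Set.Icc 0 (u ^ p'⁻¹) ∪ Set.Iio 0) := measure_mono sub1
          _ ≤ ν (Set.Icc 0 (u ^ p'⁻¹)) + ν (Set.Iio 0) := measure_union_le _ _
          _ = ν (Set.Icc 0 (u ^ p'⁻¹)) := by rw [hνneg, add_zero]
      · exact measure_mono sub2
    rw [hν1, hk]
    have hnn : 0 ≤ s * (lam+u) ^ (-s-1) := by
      have : 0 ≤ lam + u := by linarith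
      positivity
    rw [ENNReal.ofReal_mul hnn, ENNReal.ofReal_toReal (hfin _)]
  -- RHS as a lintegral
  have L5 : ∫ u in Set.Ioi (0:ℝ), s * (lam+u) ^ (-s-1) * (ν (Set.Icc 0 (u ^ p'⁻¹))).toReal
      = (∫⁻ u in Set.Ioi (0:ℝ),
          ENNReal.ofReal (s * (lam+u) ^ (-s-1) * (ν (Set.Icc 0 (u ^ p'⁻¹))).toReal)).toReal := by
    apply integral_eq_lintegral_of_nonneg_ae
    · filter_upwards [ae_restrict_mem measurableSet_Ioi] with u hu
      simp only [Set.mem_Ioi] at hu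
      have h1 : 0 ≤ lam + u := by linarith
      have h2 : (0:ℝ) ≤ (ν (Set.Icc 0 (u ^ p'⁻¹))).toReal := ENNReal.toReal_nonneg
      positivity
    · apply Measurable.aestronglyMeasurable
      apply Measurable.mul
      · fun_prop
      · exact hFmeas.comp (by fun_prop)
  rw [L1, L2, L3, L5]
  congr 1
  apply lintegral_congr_ae
  filter_upwards [ae_restrict_mem measurableSet_Ioi] with u hu
  exact L4 u hu

/-- Asymptotic behaviour of the Talentian-bubble integral (Proposition 2.3(ii)). -/
theorem talenti_bubble_integral_asymptotics (n : ℕ) (hn : 2 ≤ n) (p : ℝ) (hp : 1 < p)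
    (hpn : p < n) (s : ℝ) (hs : (n : ℝ) / (p / (p - 1)) < s)
    (ν : Measure ℝ) (hνneg : ν (Set.Iio 0) = 0)
    (hmono : AntitoneOn (fun ρ : ℝ => (ν (Set.Icc 0 ρ)).toReal / ρ ^ n) (Set.Ioi 0))
    (hbound : ∀ ρ : ℝ, 0 < ρ → ν (Set.Icc 0 ρ) ≤ ENNReal.ofReal (ballVol n * ρ ^ n))
    (θ : ℝ)
    (hθ : Tendsto (fun ρ : ℝ => (ν (Set.Icc 0 ρ)).toReal / ρ ^ n) atTop (nhds θ)) :
    Tendsto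
      (fun lam : ℝ =>
        lam ^ (s - (n : ℝ) / (p / (p - 1))) * ∫ ρ, (lam + ρ ^ (p / (p - 1))) ^ (-s) ∂ν)
      atTop
      (nhds (θ * (Real.Gamma ((n : ℝ) / (p / (p - 1)) + 1) *
        Real.Gamma (s - (n : ℝ) / (p / (p - 1))) / Real.Gamma s))) := by
  set p' : ℝ := p / (p - 1) with hp'def
  set q : ℝ := (n : ℝ) / p' with hqdef
  have hp1 : (0:ℝ) < p - 1 := by linarith
  have hp'pos : 0 < p' := div_pos (by linarith) hp1
  have hn0 : (0:ℝ) < n := by positivity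
  have hq0 : 0 < q := div_pos hn0 hp'pos
  have hqs : q < s := hs
  have hs0 : (0:ℝ) < s := lt_trans hq0 hqs
  set F : ℝ → ℝ := fun r => (ν (Set.Icc 0 r)).toReal with hFdef
  have hballnn : 0 ≤ ballVol n := by
    apply div_nonneg (Real.rpow_nonneg Real.pi_pos.le _)
    exact (Real.Gamma_pos_of_pos (by positivity)).le
  have hfin : ∀ r : ℝ, ν (Set.Icc 0 r) ≠ ⊤ := by
    intro r
    have h1 : ν (Set.Icc 0 r) ≤ ν (Set.Icc 0 (max r 1)) :=
      measure_mono (Set.Icc_subset_Icc_right (le_max_left r 1))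
    have h2 := hbound (max r 1) (lt_of_lt_of_le one_pos (le_max_right r 1))
    exact ne_top_of_le_ne_top ENNReal.ofReal_ne_top (h1.trans h2)
  haveI : SigmaFinite ν := by
    apply Measure.sigmaFinite_of_countable (S := insert (Set.Iio 0) (Set.range fun m : ℕ => Set.Icc (0:ℝ) m))
    · exact (Set.countable_range _).insert _
    · rintro t (rfl | ⟨m, rfl⟩)
      · rw [hνneg]; exact ENNReal.zero_lt_top
      · exact lt_top_iff_ne_top.mpr (hfin m)
    · apply Set.eq_univ_of_forall
      intro x
      rcases lt_or_ge x 0 with h | h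
      · exact Set.mem_sUnion.mpr ⟨Set.Iio 0, Set.mem_insert _ _, h⟩
      · exact Set.mem_sUnion.mpr ⟨Set.Icc 0 ⌈x⌉₊, Set.mem_insert_of_mem _ ⟨⌈x⌉₊, rfl⟩,
          ⟨h, Nat.le_ceil x⟩⟩
  have hFmono : Monotone F := fun r r' h =>
    ENNReal.toReal_mono (hfin r') (measure_mono (Set.Icc_subset_Icc_right h))
  have hFmeas : Measurable F := hFmono.measurable
  set G : ℝ → ℝ := fun r => F r / r ^ n with hGdef
  set H : ℝ → ℝ := fun x => G (x ^ p'⁻¹) with hHdef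
  have hGmeas : Measurable G := hFmeas.div (measurable_id.pow_const n)
  have hHmeas : Measurable H := hGmeas.comp (by fun_prop)
  have hGb : ∀ r : ℝ, 0 < r → 0 ≤ G r ∧ G r ≤ ballVol n := by
    intro r hr
    have hrn : (0:ℝ) < r ^ n := by positivity
    constructor
    · exact div_nonneg ENNReal.toReal_nonneg hrn.le
    · rw [div_le_iff₀ hrn]
      calc F r ≤ (ENNReal.ofReal (ballVol n * r ^ n)).toReal :=
            ENNReal.toReal_mono ENNReal.ofReal_ne_top (hbound r hr)
        _ = ballVol n * r ^ n := ENNReal.toReal_ofReal (by positivity)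
  have hHb : ∀ x : ℝ, 0 < x → 0 ≤ H x ∧ H x ≤ ballVol n :=
    fun x hx => hGb _ (Real.rpow_pos_of_pos hx _)
  have hHtend : Tendsto H atTop (𝓝 θ) :=
    hθ.comp (tendsto_rpow_atTop (inv_pos.mpr hp'pos))
  -- key identity
  have key : ∀ lam : ℝ, 0 < lam →
      lam ^ (s - q) * ∫ ρ, (lam + ρ ^ p') ^ (-s) ∂ν
        = ∫ v in Set.Ioi (0:ℝ), s * (1+v) ^ (-s-1) * v ^ q * H (lam * v) := by
    intro lam hlam
    rw [fubiniStep p' s hp'pos hs0 ν hνneg hfin hFmeas hlam]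
    have hcv := integral_comp_mul_left_Ioi
      (fun u => s * (lam+u) ^ (-s-1) * F (u ^ p'⁻¹)) 0 hlam
    rw [mul_zero] at hcv
    rw [show (∫ u in Set.Ioi (0:ℝ), s * (lam+u) ^ (-s-1) * F (u ^ p'⁻¹))
        = lam * ∫ v in Set.Ioi (0:ℝ), s * (lam+lam*v) ^ (-s-1) * F ((lam*v) ^ p'⁻¹) by
      rw [hcv, smul_eq_mul, ← mul_assoc, mul_inv_cancel₀ hlam.ne', one_mul]]
    rw [← mul_assoc, ← integral_const_mul]
    apply setIntegral_congr_fun measurableSet_Ioi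
    intro v hv
    simp only [Set.mem_Ioi] at hv
    simp only []
    have hx : 0 < lam * v := mul_pos hlam hv
    have hxq : (0:ℝ) < (lam*v) ^ q := Real.rpow_pos_of_pos hx _
    have eF : F ((lam*v) ^ p'⁻¹) = H (lam*v) * (lam*v) ^ q := by
      have exq : ((lam*v) ^ p'⁻¹) ^ n = (lam*v) ^ q := by
        rw [← Real.rpow_natCast ((lam*v) ^ p'⁻¹) n, ← Real.rpow_mul hx.le, hqdef]
        congr 1
        field_simp
      rw [hHdef, hGdef]
      simp only []
      rw [exq, div_mul_cancel₀ _ hxq.ne']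
    have elam : lam ^ (s-q) * lam * lam ^ (-s-1) * lam ^ q = 1 := by
      have h1 : lam * lam ^ (-s-1) = lam ^ (-s) := by
        nth_rewrite 1 [← Real.rpow_one lam]
        rw [← Real.rpow_add hlam]
        norm_num
      calc lam ^ (s-q) * lam * lam ^ (-s-1) * lam ^ q
          = lam ^ (s-q) * (lam * lam ^ (-s-1)) * lam ^ q := by ring
        _ = lam ^ (s-q) * lam ^ (-s) * lam ^ q := by rw [h1]
        _ = lam ^ ((s-q) + (-s) + q) := by
            rw [Real.rpow_add hlam, Real.rpow_add hlam]
        _ = 1 := by rw [show (s-q) + (-s) + q = 0 by ring, Real.rpow_zero]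
    rw [show lam + lam * v = lam * (1+v) by ring,
      Real.mul_rpow hlam.le (by linarith : (0:ℝ) ≤ 1+v), eF,
      Real.mul_rpow hlam.le hv.le]
    calc lam ^ (s-q) * lam * (s * (lam ^ (-s-1) * (1+v) ^ (-s-1)) * (H (lam*v) * (lam ^ q * v ^ q)))
        = (lam ^ (s-q) * lam * lam ^ (-s-1) * lam ^ q) * (s * (1+v) ^ (-s-1) * v ^ q * H (lam*v)) := by
          ring
      _ = s * (1+v) ^ (-s-1) * v ^ q * H (lam*v) := by rw [elam, one_mul]
  -- dominated convergence
  have hlim : Tendsto (fun lam : ℝ => ∫ v in Set.Ioi (0:ℝ), s * (1+v) ^ (-s-1) * v ^ q * H (lam * v))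
      atTop (𝓝 (∫ v in Set.Ioi (0:ℝ), s * (1+v) ^ (-s-1) * v ^ q * θ)) := by
    apply tendsto_integral_filter_of_dominated_convergence
      (bound := fun v => s * ballVol n * (v ^ q * (1+v) ^ (-s-1)))
    · filter_upwards with lam
      apply Measurable.aestronglyMeasurable
      exact (by fun_prop : Measurable fun v : ℝ => s * (1+v) ^ (-s-1) * v ^ q).mul
        (hHmeas.comp (measurable_const_mul lam))
    · filter_upwards [eventually_ge_atTop (1:ℝ)] with lam hlam
      filter_upwards [ae_restrict_mem measurableSet_Ioi] with v hv
      simp only [Set.mem_Ioi] at hv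
      have hx : 0 < lam * v := mul_pos (by linarith) hv
      obtain ⟨hH0, hHle⟩ := hHb _ hx
      have h1v : (0:ℝ) < 1 + v := by linarith
      rw [Real.norm_eq_abs, abs_of_nonneg (by positivity)]
      calc s * (1+v) ^ (-s-1) * v ^ q * H (lam*v) ≤ s * (1+v) ^ (-s-1) * v ^ q * ballVol n := by
            apply mul_le_mul_of_nonneg_left hHle (by positivity)
        _ = s * ballVol n * (v ^ q * (1+v) ^ (-s-1)) := by ring
    · exact (boundIntegrable q s (by linarith) hqs).const_mul _
    · filter_upwards [ae_restrict_mem measurableSet_Ioi] with v hv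
      simp only [Set.mem_Ioi] at hv
      exact Tendsto.const_mul _ (hHtend.comp (Tendsto.atTop_mul_const hv tendsto_id))
  -- value of the limit
  have hval : (∫ v in Set.Ioi (0:ℝ), s * (1+v) ^ (-s-1) * v ^ q * θ)
      = θ * (Real.Gamma (q + 1) * Real.Gamma (s - q) / Real.Gamma s) := by
    rw [show (fun v : ℝ => s * (1+v) ^ (-s-1) * v ^ q * θ)
        = fun v : ℝ => (s * θ) * (v ^ q * (1+v) ^ (-s-1)) from funext fun v => by ring]
    rw [integral_const_mul, myBetaIoi q s (by linarith) hqs]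
    rw [Real.Gamma_add_one hs0.ne']
    field_simp
  rw [← hval]
  apply hlim.congr'
  filter_upwards [eventually_gt_atTop (0:ℝ)] with lam hlam
  exact (key lam hlam).symm
end

section
/- Let n ≥ 2 be an integer, p > 1, and p' = p/(p-1). Let ν be a Borel measure on [0,∞) such that the function ρ ↦ ν([0,ρ])/ρ^n is nonincreasing on (0,∞) and bounded above by ω_n, and let θ = lim_{ρ→∞} ν([0,ρ])/ρ^n. Then lim_{λ→0^+} λ^{n/p' + 1} ∫_{[0,∞)} ρ^{p'} e^{-λ ρ^{p'}} dν(ρ) = θ · (n/p') · Γ(n/p' + 1). -/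
open Real MeasureTheory Filter Topology

section GaussianBubbleAux
open Set
open scoped ENNReal NNReal

lemma integ_master {s q lam : ℝ} (hs : -1 < s) (hq : 1 ≤ q) (hlam : 0 < lam) :
    IntegrableOn (fun t : ℝ => t ^ s * Real.exp (-(lam * t ^ q))) (Set.Ioi 0) := by
  simpa [neg_mul] using integrableOn_rpow_mul_exp_neg_mul_rpow hs (lt_of_lt_of_le one_pos hq) hlam

lemma hasDerivAt_exp_term (q lam : ℝ) {t : ℝ} (ht : 0 < t) :
    HasDerivAt (fun x : ℝ => Real.exp (-(lam * x ^ q)))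
      (-(lam * (q * t ^ (q - 1))) * Real.exp (-(lam * t ^ q))) t := by
  have h1 : HasDerivAt (fun x : ℝ => x ^ q) (q * t ^ (q - 1)) t :=
    Real.hasDerivAt_rpow_const (Or.inl ht.ne')
  have h2 : HasDerivAt (fun x : ℝ => -(lam * x ^ q)) (-(lam * (q * t ^ (q - 1)))) t :=
    ((h1.const_mul lam).neg)
  simpa [mul_comm] using h2.exp

lemma integralB {q lam : ℝ} (hq : 1 ≤ q) (hlam : 0 < lam) {ρ : ℝ} (hρ : 0 ≤ ρ) :
    ∫ t in Set.Ioi ρ, lam * q * t ^ (q - 1) * Real.exp (-(lam * t ^ q))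
      = Real.exp (-(lam * ρ ^ q)) := by
  have hq0 : 0 < q := lt_of_lt_of_le one_pos hq
  have hcont : ContinuousWithinAt (fun x : ℝ => -Real.exp (-(lam * x ^ q))) (Set.Ici ρ) ρ := by
    have : ContinuousAt (fun x : ℝ => -Real.exp (-(lam * x ^ q))) ρ := by
      exact (((Real.continuousAt_rpow_const ρ q (Or.inr hq0.le)).const_mul lam).neg.rexp).neg
    exact this.continuousWithinAt
  have hderiv : ∀ t ∈ Set.Ioi ρ, HasDerivAt (fun x : ℝ => -Real.exp (-(lam * x ^ q)))
      (lam * q * t ^ (q - 1) * Real.exp (-(lam * t ^ q))) t := by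
    intro t ht
    have ht0 : 0 < t := lt_of_le_of_lt hρ ht
    have := (hasDerivAt_exp_term q lam ht0).neg
    refine this.congr_deriv ?_
    ring
  have hint : IntegrableOn (fun t : ℝ => lam * q * t ^ (q - 1) * Real.exp (-(lam * t ^ q)))
      (Set.Ioi ρ) := by
    have h1 : -1 < q - 1 := by linarith
    have hbase : IntegrableOn (fun t : ℝ => lam * q * (t ^ (q - 1) * Real.exp (-(lam * t ^ q))))
        (Set.Ioi 0) volume := (integ_master h1 hq hlam).const_mul _
    have := hbase.mono_set (Set.Ioi_subset_Ioi hρ)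
    exact this.congr_fun (fun t _ => by ring) measurableSet_Ioi
  have htends : Tendsto (fun x : ℝ => -Real.exp (-(lam * x ^ q))) atTop (𝓝 0) := by
    have h1 : Tendsto (fun x : ℝ => lam * x ^ q) atTop atTop :=
      (tendsto_rpow_atTop hq0).const_mul_atTop hlam
    have := (Real.tendsto_exp_neg_atTop_nhds_zero.comp h1).neg
    simpa using this
  have := integral_Ioi_of_hasDerivAt_of_tendsto hcont hderiv hint htends
  rw [this]; simp

lemma integralA {q lam : ℝ} (hq : 1 ≤ q) (hlam : 0 < lam) {ρ : ℝ} (hρ : 0 ≤ ρ) :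
    ∫ t in Set.Ioi ρ, lam * q * t ^ (2 * q - 1) * Real.exp (-(lam * t ^ q))
      = (ρ ^ q + lam⁻¹) * Real.exp (-(lam * ρ ^ q)) := by
  have hq0 : 0 < q := lt_of_lt_of_le one_pos hq
  have hlam' : lam ≠ 0 := hlam.ne'
  set F : ℝ → ℝ := fun x => -((x ^ q + lam⁻¹) * Real.exp (-(lam * x ^ q))) with hF
  have hcont : ContinuousWithinAt F (Set.Ici ρ) ρ := by
    have : ContinuousAt F ρ := by
      have h1 : ContinuousAt (fun x : ℝ => x ^ q) ρ :=
        Real.continuousAt_rpow_const ρ q (Or.inr hq0.le)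
      exact (((h1.add continuousAt_const).mul ((h1.const_mul lam).neg.rexp)).neg)
    exact this.continuousWithinAt
  have hderiv : ∀ t ∈ Set.Ioi ρ, HasDerivAt F
      (lam * q * t ^ (2 * q - 1) * Real.exp (-(lam * t ^ q))) t := by
    intro t ht
    have ht0 : 0 < t := lt_of_le_of_lt hρ ht
    have h1 : HasDerivAt (fun x : ℝ => x ^ q + lam⁻¹) (q * t ^ (q - 1)) t := by
      simpa using (Real.hasDerivAt_rpow_const (p := q) (Or.inl ht0.ne')).add_const lam⁻¹
    have h2 := hasDerivAt_exp_term q lam ht0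
    have h3 := (h1.mul h2).neg
    refine h3.congr_deriv ?_
    have e1 : t ^ (2 * q - 1) = t ^ q * t ^ (q - 1) := by
      rw [← Real.rpow_add ht0]; ring_nf
    rw [e1, Real.rpow_sub_one ht0.ne']
    field_simp
    ring
  have hint : IntegrableOn (fun t : ℝ => lam * q * t ^ (2 * q - 1) * Real.exp (-(lam * t ^ q)))
      (Set.Ioi ρ) := by
    have h1 : (-1 : ℝ) < 2 * q - 1 := by linarith
    have hbase : IntegrableOn
        (fun t : ℝ => lam * q * (t ^ (2 * q - 1) * Real.exp (-(lam * t ^ q))))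
        (Set.Ioi 0) volume := (integ_master h1 hq hlam).const_mul _
    have := hbase.mono_set (Set.Ioi_subset_Ioi hρ)
    exact this.congr_fun (fun t _ => by ring) measurableSet_Ioi
  have htends : Tendsto F atTop (𝓝 0) := by
    have h1 : Tendsto (fun x : ℝ => lam * x ^ q) atTop atTop :=
      (tendsto_rpow_atTop hq0).const_mul_atTop hlam
    have h2 : Tendsto (fun u : ℝ => u * Real.exp (-u)) atTop (𝓝 0) := by
      simpa using Real.tendsto_pow_mul_exp_neg_atTop_nhds_zero 1
    have h3 : Tendsto (fun x : ℝ => (lam * x ^ q) * Real.exp (-(lam * x ^ q))) atTop (𝓝 0) :=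
      h2.comp h1
    have h4 : Tendsto (fun x : ℝ => Real.exp (-(lam * x ^ q))) atTop (𝓝 0) :=
      Real.tendsto_exp_neg_atTop_nhds_zero.comp h1
    have h5 : Tendsto (fun x : ℝ =>
        -(lam⁻¹ * ((lam * x ^ q) * Real.exp (-(lam * x ^ q))) +
          lam⁻¹ * Real.exp (-(lam * x ^ q)))) atTop (𝓝 (-(lam⁻¹ * 0 + lam⁻¹ * 0))) :=
      (((h3.const_mul lam⁻¹).add (h4.const_mul lam⁻¹)).neg)
    simp only [mul_zero, add_zero, neg_zero] at h5
    refine h5.congr (fun x => ?_)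
    rw [hF]
    field_simp
  have := integral_Ioi_of_hasDerivAt_of_tendsto hcont hderiv hint htends
  rw [this, hF]
  ring

lemma swap_lemma (ν : Measure ℝ) [SFinite ν] (g : ℝ → ℝ≥0∞) (hg : Measurable g) :
    ∫⁻ ρ, ∫⁻ t in Set.Ioi ρ, g t ∂(volume : Measure ℝ) ∂ν
      = ∫⁻ t, ν (Set.Iic t) * g t ∂(volume : Measure ℝ) := by
  have step1 : ∀ ρ : ℝ, ∫⁻ t in Set.Ioi ρ, g t ∂(volume : Measure ℝ)
      = ∫⁻ t, (Set.Ici ρ).indicator g t ∂(volume : Measure ℝ) := by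
    intro ρ
    rw [restrict_Ioi_eq_restrict_Ici, lintegral_indicator measurableSet_Ici]
  simp_rw [step1]
  rw [lintegral_lintegral_swap]
  · refine lintegral_congr fun t => ?_
    have : ∀ ρ : ℝ, (Set.Ici ρ).indicator g t = (Set.Iic t).indicator (fun _ => g t) ρ := by
      intro ρ
      by_cases h : ρ ≤ t <;> simp [Set.indicator, h]
    simp_rw [this]
    rw [lintegral_indicator_const measurableSet_Iic, mul_comm]
  · have : Function.uncurry (fun ρ t => (Set.Ici ρ).indicator g t)
        = fun z : ℝ × ℝ => Set.indicator {w : ℝ × ℝ | w.1 ≤ w.2} (fun w => g w.2) z := by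
      funext z
      rcases z with ⟨ρ, t⟩
      by_cases h : ρ ≤ t <;> simp [Function.uncurry, Set.indicator, h]
    rw [this]
    exact ((hg.comp measurable_snd).indicator
      (measurableSet_le measurable_fst measurable_snd)).aemeasurable

lemma integralB' {q lam : ℝ} (hq : 1 ≤ q) (hlam : 0 < lam) {ρ : ℝ} (hρ : 0 ≤ ρ) :
    ∫ t in Set.Ioi ρ, q * t ^ (q - 1) * Real.exp (-(lam * t ^ q))
      = lam⁻¹ * Real.exp (-(lam * ρ ^ q)) := by
  have h1 := integralB hq hlam hρ
  have h2 : ∀ t : ℝ, lam * q * t ^ (q - 1) * Real.exp (-(lam * t ^ q))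
      = lam * (q * t ^ (q - 1) * Real.exp (-(lam * t ^ q))) := fun t => by ring
  simp_rw [h2] at h1
  rw [integral_const_mul] at h1
  field_simp at h1 ⊢
  linarith [h1]

lemma repr_lemma {q lam m C : ℝ} (hq : 1 < q) (hlam : 0 < lam) (hm : 0 ≤ m)
    (ν : Measure ℝ) [SigmaFinite ν] (hνneg : ν (Set.Iio 0) = 0)
    (hfin : ∀ t : ℝ, ν (Set.Iic t) ≠ ⊤)
    (hGb : ∀ t : ℝ, 0 < t → (ν (Set.Iic t)).toReal ≤ C * t ^ m) :
    ∫ ρ, ρ ^ q * Real.exp (-(lam * ρ ^ q)) ∂ν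
      = ∫ t in Set.Ioi 0,
          (lam * q * t ^ (2 * q - 1) - q * t ^ (q - 1)) * Real.exp (-(lam * t ^ q))
            * (ν (Set.Iic t)).toReal := by
  have hq1 : 1 ≤ q := hq.le
  have hq0 : 0 < q := lt_trans one_pos hq
  set G : ℝ → ℝ := fun t => (ν (Set.Iic t)).toReal with hG
  have hGmono : Monotone G := by
    intro s t hst
    exact ENNReal.toReal_mono (hfin t) (measure_mono (Set.Iic_subset_Iic.mpr hst))
  have hGmeas : Measurable G := hGmono.measurable
  have hGnonneg : ∀ t, 0 ≤ G t := fun t => ENNReal.toReal_nonneg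
  have hC0 : 0 ≤ C := by
    have := (hGnonneg 1).trans (hGb 1 one_pos)
    simpa using this
  set A : ℝ → ℝ := fun t => lam * q * t ^ (2 * q - 1) * Real.exp (-(lam * t ^ q)) with hA
  set B : ℝ → ℝ := fun t => q * t ^ (q - 1) * Real.exp (-(lam * t ^ q)) with hB
  have hrmeas : ∀ e : ℝ, 0 ≤ e → Measurable (fun t : ℝ => t ^ e) := fun e he =>
    (continuous_id.rpow_const (fun x => Or.inr he)).measurable
  have hexpmeas : Measurable (fun t : ℝ => Real.exp (-(lam * t ^ q))) :=
    (((hrmeas q hq0.le).const_mul lam).neg).exp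
  have hAmeas : Measurable A :=
    ((hrmeas (2 * q - 1) (by linarith)).const_mul _).mul hexpmeas
  have hBmeas : Measurable B :=
    ((hrmeas (q - 1) (by linarith)).const_mul _).mul hexpmeas
  have hAnonneg : ∀ t : ℝ, 0 < t → 0 ≤ A t := fun t ht => by
    have : (0:ℝ) ≤ t ^ (2 * q - 1) := Real.rpow_nonneg ht.le _
    positivity
  have hBnonneg : ∀ t : ℝ, 0 < t → 0 ≤ B t := fun t ht => by
    have : (0:ℝ) ≤ t ^ (q - 1) := Real.rpow_nonneg ht.le _
    positivity
  have hAint : IntegrableOn A (Set.Ioi 0) := by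
    have h1 : (-1 : ℝ) < 2 * q - 1 := by linarith
    have hbase : IntegrableOn (fun t : ℝ => lam * q * (t ^ (2 * q - 1) * Real.exp (-(lam * t ^ q))))
        (Set.Ioi 0) volume := (integ_master h1 hq1 hlam).const_mul _
    exact hbase.congr_fun (fun t _ => by rw [hA]; ring) measurableSet_Ioi
  have hBint : IntegrableOn B (Set.Ioi 0) := by
    have h1 : (-1 : ℝ) < q - 1 := by linarith
    have hbase : IntegrableOn (fun t : ℝ => q * (t ^ (q - 1) * Real.exp (-(lam * t ^ q))))
        (Set.Ioi 0) volume := (integ_master h1 hq1 hlam).const_mul _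
    exact hbase.congr_fun (fun t _ => by rw [hB]; ring) measurableSet_Ioi
  -- integrability of A * G and B * G on (0, ∞)
  have prod_int : ∀ (D : ℝ → ℝ), Measurable D → (∀ t : ℝ, 0 < t → 0 ≤ D t) →
      (∀ t : ℝ, 0 < t → D t ≤ lam * q * t ^ (2 * q - 1) * Real.exp (-(lam * t ^ q))
        + q * t ^ (q - 1) * Real.exp (-(lam * t ^ q))) →
      IntegrableOn (fun t => D t * G t) (Set.Ioi 0) := by
    intro D hDmeas hDnn hDle
    have hbound_int : IntegrableOn
        (fun t : ℝ => C * (lam * q) * (t ^ (2 * q - 1 + m) * Real.exp (-(lam * t ^ q)))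
          + C * q * (t ^ (q - 1 + m) * Real.exp (-(lam * t ^ q)))) (Set.Ioi 0) := by
      have h1 : (-1 : ℝ) < 2 * q - 1 + m := by linarith
      have h2 : (-1 : ℝ) < q - 1 + m := by linarith
      exact ((integ_master h1 hq1 hlam).const_mul _).add ((integ_master h2 hq1 hlam).const_mul _)
    refine Integrable.mono hbound_int ((hDmeas.mul hGmeas).aestronglyMeasurable) ?_
    refine (ae_restrict_iff' measurableSet_Ioi).mpr (Filter.Eventually.of_forall ?_)
    intro t ht
    have ht0 : (0:ℝ) < t := ht
    have hDG : 0 ≤ D t * G t := mul_nonneg (hDnn t ht0) (hGnonneg t)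
    rw [Real.norm_eq_abs, Real.norm_eq_abs, abs_of_nonneg hDG]
    have key : D t * G t ≤ (lam * q * t ^ (2 * q - 1) * Real.exp (-(lam * t ^ q))
        + q * t ^ (q - 1) * Real.exp (-(lam * t ^ q))) * (C * t ^ m) := by
      refine mul_le_mul (hDle t ht0) (hGb t ht0) (hGnonneg t) ?_
      have e1 : (0:ℝ) ≤ t ^ (2 * q - 1) := Real.rpow_nonneg ht0.le _
      have e2 : (0:ℝ) ≤ t ^ (q - 1) := Real.rpow_nonneg ht0.le _
      positivity
    have e1 : t ^ (2 * q - 1 + m) = t ^ (2 * q - 1) * t ^ m := Real.rpow_add ht0 _ _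
    have e2 : t ^ (q - 1 + m) = t ^ (q - 1) * t ^ m := Real.rpow_add ht0 _ _
    refine le_trans (key.trans (le_of_eq ?_)) (le_abs_self _)
    rw [e1, e2]; ring
  have hAGint : IntegrableOn (fun t => A t * G t) (Set.Ioi 0) :=
    prod_int A hAmeas hAnonneg (fun t ht => le_add_of_nonneg_right (hBnonneg t ht))
  have hBGint : IntegrableOn (fun t => B t * G t) (Set.Ioi 0) :=
    prod_int B hBmeas hBnonneg (fun t ht => le_add_of_nonneg_left (hAnonneg t ht))
  -- the ENNReal-valued part
  set gA : ℝ → ℝ≥0∞ := (Set.Ioi (0:ℝ)).indicator (fun t => ENNReal.ofReal (A t)) with hgA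
  set gB : ℝ → ℝ≥0∞ := (Set.Ioi (0:ℝ)).indicator (fun t => ENNReal.ofReal (B t)) with hgB
  have hgAmeas : Measurable gA :=
    (ENNReal.measurable_ofReal.comp hAmeas).indicator measurableSet_Ioi
  have hgBmeas : Measurable gB :=
    (ENNReal.measurable_ofReal.comp hBmeas).indicator measurableSet_Ioi
  have hfmeas : Measurable (fun ρ : ℝ => ρ ^ q * Real.exp (-(lam * ρ ^ q))) :=
    (hrmeas q hq0.le).mul hexpmeas
  have hae : ∀ᵐ ρ ∂ν, 0 ≤ ρ := by
    rw [ae_iff]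
    have : {a : ℝ | ¬ 0 ≤ a} = Set.Iio 0 := by ext x; simp [not_le]
    rw [this, hνneg]
  have key1 : ∀ ρ : ℝ, 0 ≤ ρ →
      ENNReal.ofReal (ρ ^ q * Real.exp (-(lam * ρ ^ q))) + ∫⁻ t in Set.Ioi ρ, gB t
        = ∫⁻ t in Set.Ioi ρ, gA t := by
    intro ρ hρ
    have hsub : Set.Ioi ρ ⊆ Set.Ioi 0 := Set.Ioi_subset_Ioi hρ
    have eA : ∫⁻ t in Set.Ioi ρ, gA t
        = ENNReal.ofReal ((ρ ^ q + lam⁻¹) * Real.exp (-(lam * ρ ^ q))) := by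
      have e1 : ∫⁻ t in Set.Ioi ρ, gA t = ∫⁻ t in Set.Ioi ρ, ENNReal.ofReal (A t) := by
        refine setLIntegral_congr_fun measurableSet_Ioi
          (fun t ht => ?_)
        rw [hgA, Set.indicator_of_mem (hsub ht)]
      rw [e1, ← ofReal_integral_eq_lintegral_ofReal (hAint.mono_set hsub)
        ((ae_restrict_iff' measurableSet_Ioi).mpr (Filter.Eventually.of_forall
          fun t ht => hAnonneg t (lt_of_le_of_lt hρ ht))),
        integralA hq1 hlam hρ]
    have eB : ∫⁻ t in Set.Ioi ρ, gB t
        = ENNReal.ofReal (lam⁻¹ * Real.exp (-(lam * ρ ^ q))) := by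
      have e1 : ∫⁻ t in Set.Ioi ρ, gB t = ∫⁻ t in Set.Ioi ρ, ENNReal.ofReal (B t) := by
        refine setLIntegral_congr_fun measurableSet_Ioi
          (fun t ht => ?_)
        rw [hgB, Set.indicator_of_mem (hsub ht)]
      rw [e1, ← ofReal_integral_eq_lintegral_ofReal (hBint.mono_set hsub)
        ((ae_restrict_iff' measurableSet_Ioi).mpr (Filter.Eventually.of_forall
          fun t ht => hBnonneg t (lt_of_le_of_lt hρ ht))),
        integralB' hq1 hlam hρ]
    rw [eA, eB, ← ENNReal.ofReal_add
      (mul_nonneg (Real.rpow_nonneg hρ q) (Real.exp_pos _).le) (by positivity)]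
    · congr 1
      ring
  have key2 : (∫⁻ ρ, ENNReal.ofReal (ρ ^ q * Real.exp (-(lam * ρ ^ q))) ∂ν)
      + ∫⁻ ρ, (∫⁻ t in Set.Ioi ρ, gB t) ∂ν = ∫⁻ ρ, (∫⁻ t in Set.Ioi ρ, gA t) ∂ν := by
    rw [← lintegral_add_left hfmeas.ennreal_ofReal]
    refine lintegral_congr_ae ?_
    filter_upwards [hae] with ρ hρ
    exact key1 ρ hρ
  rw [swap_lemma ν gA hgAmeas, swap_lemma ν gB hgBmeas] at key2
  have prod_eq : ∀ (D : ℝ → ℝ) (gD : ℝ → ℝ≥0∞),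
      gD = (Set.Ioi (0:ℝ)).indicator (fun t => ENNReal.ofReal (D t)) →
      (∀ t : ℝ, 0 < t → 0 ≤ D t) → IntegrableOn (fun t => D t * G t) (Set.Ioi 0) →
      ∫⁻ t, ν (Set.Iic t) * gD t
        = ENNReal.ofReal (∫ t in Set.Ioi 0, D t * G t) := by
    intro D gD hgD hDnn hDGint
    have e1 : ∀ t, ν (Set.Iic t) * gD t
        = (Set.Ioi (0:ℝ)).indicator (fun t => ENNReal.ofReal (D t * G t)) t := by
      intro t
      by_cases ht : t ∈ Set.Ioi (0:ℝ)
      · rw [hgD, Set.indicator_of_mem ht, Set.indicator_of_mem ht,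
          ENNReal.ofReal_mul (hDnn t ht)]
        rw [show ν (Set.Iic t) = ENNReal.ofReal (G t) from (ENNReal.ofReal_toReal (hfin t)).symm]
        ring
      · rw [hgD, Set.indicator_of_notMem ht, Set.indicator_of_notMem ht, mul_zero]
    simp_rw [e1]
    rw [lintegral_indicator measurableSet_Ioi,
      ← ofReal_integral_eq_lintegral_ofReal hDGint
        ((ae_restrict_iff' measurableSet_Ioi).mpr (Filter.Eventually.of_forall
          fun t ht => mul_nonneg (hDnn t ht) (hGnonneg t)))]
  rw [prod_eq A gA hgA hAnonneg hAGint, prod_eq B gB hgB hBnonneg hBGint] at key2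
  set IA : ℝ := ∫ t in Set.Ioi 0, A t * G t with hIA
  set IB : ℝ := ∫ t in Set.Ioi 0, B t * G t with hIB
  have hIAnn : 0 ≤ IA := setIntegral_nonneg measurableSet_Ioi
    (fun t ht => mul_nonneg (hAnonneg t ht) (hGnonneg t))
  have hIBnn : 0 ≤ IB := setIntegral_nonneg measurableSet_Ioi
    (fun t ht => mul_nonneg (hBnonneg t ht) (hGnonneg t))
  have hintf : ∫ ρ, ρ ^ q * Real.exp (-(lam * ρ ^ q)) ∂ν
      = (∫⁻ ρ, ENNReal.ofReal (ρ ^ q * Real.exp (-(lam * ρ ^ q))) ∂ν).toReal := by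
    refine integral_eq_lintegral_of_nonneg_ae ?_ hfmeas.aestronglyMeasurable
    filter_upwards [hae] with ρ hρ
    exact mul_nonneg (Real.rpow_nonneg hρ q) (Real.exp_pos _).le
  have hsub : (∫⁻ ρ, ENNReal.ofReal (ρ ^ q * Real.exp (-(lam * ρ ^ q))) ∂ν)
      = ENNReal.ofReal IA - ENNReal.ofReal IB :=
    ENNReal.eq_sub_of_add_eq ENNReal.ofReal_ne_top key2
  have hle : ENNReal.ofReal IB ≤ ENNReal.ofReal IA := by
    rw [← key2]
    exact le_add_self
  rw [hintf, hsub, ENNReal.toReal_sub_of_le hle ENNReal.ofReal_ne_top,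
    ENNReal.toReal_ofReal hIAnn, ENNReal.toReal_ofReal hIBnn, hIA, hIB,
    ← integral_sub hAGint hBGint]
  refine setIntegral_congr_fun measurableSet_Ioi (fun t ht => ?_)
  simp only [hA, hB]
  ring

theorem aux_main {q m C θ : ℝ} (hq : 1 < q) (hm : 0 < m)
    (ν : Measure ℝ) [SigmaFinite ν] (hνneg : ν (Set.Iio 0) = 0)
    (hfin : ∀ t : ℝ, ν (Set.Iic t) ≠ ⊤)
    (hGb : ∀ t : ℝ, 0 < t → (ν (Set.Iic t)).toReal ≤ C * t ^ m)
    (hθ : Tendsto (fun x : ℝ => (ν (Set.Iic x)).toReal / x ^ m) atTop (𝓝 θ)) :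
    Tendsto (fun lam : ℝ => lam ^ (m / q + 1) * ∫ ρ, ρ ^ q * Real.exp (-(lam * ρ ^ q)) ∂ν)
      (𝓝[>] 0) (𝓝 (θ * (m / q) * Real.Gamma (m / q + 1))) := by
  have hq0 : 0 < q := lt_trans one_pos hq
  have hq0' : q ≠ 0 := hq0.ne'
  set G : ℝ → ℝ := fun t => (ν (Set.Iic t)).toReal with hGdef
  have hGmono : Monotone G := fun s t hst =>
    ENNReal.toReal_mono (hfin t) (measure_mono (Set.Iic_subset_Iic.mpr hst))
  have hGmeas : Measurable G := hGmono.measurable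
  have hGnonneg : ∀ t, 0 ≤ G t := fun t => ENNReal.toReal_nonneg
  have hC0 : 0 ≤ C := by
    have := (hGnonneg 1).trans (hGb 1 one_pos)
    simpa using this
  have hrmeas : ∀ e : ℝ, Measurable (fun t : ℝ => t ^ e) := fun e =>
    measurable_id.pow measurable_const
  set hfun : ℝ → ℝ := fun x => G x / x ^ m with hhfun
  have hfunmeas : Measurable hfun := hGmeas.div (hrmeas m)
  have hfun_nonneg : ∀ x : ℝ, 0 < x → 0 ≤ hfun x := fun x hx =>
    div_nonneg (hGnonneg x) (Real.rpow_nonneg hx.le m)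
  have hfun_le : ∀ x : ℝ, 0 < x → hfun x ≤ C := fun x hx => by
    rw [hhfun, div_le_iff₀ (Real.rpow_pos_of_pos hx m)]
    exact hGb x hx
  set Ψ : ℝ → ℝ := fun s =>
    q * (s ^ (2 * q - 1) - s ^ (q - 1)) * s ^ m * Real.exp (-(s ^ q)) with hΨ
  have hΨmeas : Measurable Ψ :=
    ((((hrmeas (2*q-1)).sub (hrmeas (q-1))).const_mul q).mul (hrmeas m)).mul
      ((hrmeas q).neg.exp)
  have i1int : IntegrableOn (fun s : ℝ => s ^ (2 * q - 1 + m) * Real.exp (-(s ^ q)))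
      (Set.Ioi 0) := by
    have := integ_master (s := 2 * q - 1 + m) (by linarith) hq.le one_pos
    simpa using this
  have i2int : IntegrableOn (fun s : ℝ => s ^ (q - 1 + m) * Real.exp (-(s ^ q)))
      (Set.Ioi 0) := by
    have := integ_master (s := q - 1 + m) (by linarith) hq.le one_pos
    simpa using this
  have hΨint : IntegrableOn Ψ (Set.Ioi 0) := by
    have hbase : IntegrableOn (fun s : ℝ => q * (s ^ (2 * q - 1 + m) * Real.exp (-(s ^ q)))
        - q * (s ^ (q - 1 + m) * Real.exp (-(s ^ q)))) (Set.Ioi 0) :=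
      (i1int.const_mul q).sub (i2int.const_mul q)
    refine hbase.congr_fun (fun s hs => ?_) measurableSet_Ioi
    have hs0 : (0:ℝ) < s := hs
    beta_reduce
    rw [Real.rpow_add hs0, Real.rpow_add hs0, hΨ]
    ring
  -- change of variables
  have key : ∀ lam : ℝ, 0 < lam →
      lam ^ (m / q + 1) * ∫ ρ, ρ ^ q * Real.exp (-(lam * ρ ^ q)) ∂ν
        = ∫ s in Set.Ioi 0, Ψ s * hfun (lam ^ (-q⁻¹ : ℝ) * s) := by
    intro lam hlam
    set b : ℝ := lam ^ (-q⁻¹ : ℝ) with hbdef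
    have hb : 0 < b := Real.rpow_pos_of_pos hlam _
    rw [repr_lemma hq hlam hm.le ν hνneg hfin hGb]
    have cov := integral_comp_mul_left_Ioi
      (fun t : ℝ => (lam * q * t ^ (2 * q - 1) - q * t ^ (q - 1)) * Real.exp (-(lam * t ^ q))
        * G t) 0 hb
    rw [mul_zero, smul_eq_mul] at cov
    have cov' : ∫ t in Set.Ioi (0:ℝ),
        (lam * q * t ^ (2 * q - 1) - q * t ^ (q - 1)) * Real.exp (-(lam * t ^ q)) * G t
        = b * ∫ s in Set.Ioi (0:ℝ),
            (lam * q * (b*s) ^ (2 * q - 1) - q * (b*s) ^ (q - 1))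
              * Real.exp (-(lam * (b*s) ^ q)) * G (b*s) := by
      rw [cov, ← mul_assoc, mul_inv_cancel₀ hb.ne', one_mul]
    rw [cov', ← mul_assoc]
    rw [show lam ^ (m / q + 1) * b = b * lam ^ (m / q + 1) from mul_comm _ _]
    rw [mul_assoc, ← integral_const_mul, ← integral_const_mul]
    refine setIntegral_congr_fun measurableSet_Ioi (fun s hs => ?_)
    have hs0 : (0:ℝ) < s := hs
    have hbs : (0:ℝ) < b * s := mul_pos hb hs0
    -- basic power identities
    have hbq : b ^ q = lam⁻¹ := by
      rw [hbdef, ← Real.rpow_mul hlam.le, neg_mul, inv_mul_cancel₀ hq0',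
        Real.rpow_neg_one]
    have hexp : Real.exp (-(lam * (b*s) ^ q)) = Real.exp (-(s ^ q)) := by
      rw [Real.mul_rpow hb.le hs0.le, hbq, ← mul_assoc, mul_inv_cancel₀ hlam.ne', one_mul]
    have ht2q : (b*s) ^ (2*q-1) = b ^ (2*q-1) * s ^ (2*q-1) := Real.mul_rpow hb.le hs0.le
    have ht1q : (b*s) ^ (q-1) = b ^ (q-1) * s ^ (q-1) := Real.mul_rpow hb.le hs0.le
    have htm : (b*s) ^ m = b ^ m * s ^ m := Real.mul_rpow hb.le hs0.le
    have hb2q : b ^ (2*q-1) = lam ^ (-q⁻¹ * (2*q-1)) := by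
      rw [hbdef, ← Real.rpow_mul hlam.le]
    have hb1q : b ^ (q-1) = lam ^ (-q⁻¹ * (q-1)) := by
      rw [hbdef, ← Real.rpow_mul hlam.le]
    have hbm : b ^ m = lam ^ (-q⁻¹ * m) := by
      rw [hbdef, ← Real.rpow_mul hlam.le]
    have mulpow : ∀ a c : ℝ, lam ^ a * lam ^ c = lam ^ (a + c) := fun a c =>
      (Real.rpow_add hlam a c).symm
    have c1 : b * lam ^ (m/q+1) * lam * (b ^ (2*q-1) * b ^ m) = 1 := by
      calc b * lam ^ (m/q+1) * lam * (b ^ (2*q-1) * b ^ m)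
          = lam ^ (-q⁻¹:ℝ) * lam ^ (m/q+1) * lam ^ (1:ℝ)
            * (lam ^ (-q⁻¹ * (2*q-1)) * lam ^ (-q⁻¹ * m)) := by
            rw [hb2q, hbm, Real.rpow_one]
        _ = lam ^ ((-q⁻¹:ℝ) + (m/q+1) + 1 + (-q⁻¹ * (2*q-1) + -q⁻¹ * m)) := by
            rw [mulpow, mulpow, mulpow, mulpow]
        _ = lam ^ (0:ℝ) := by
            congr 1
            field_simp
            ring
        _ = 1 := Real.rpow_zero lam
    have c2 : b * lam ^ (m/q+1) * (b ^ (q-1) * b ^ m) = 1 := by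
      calc b * lam ^ (m/q+1) * (b ^ (q-1) * b ^ m)
          = lam ^ (-q⁻¹:ℝ) * lam ^ (m/q+1)
            * (lam ^ (-q⁻¹ * (q-1)) * lam ^ (-q⁻¹ * m)) := by
            rw [hb1q, hbm]
        _ = lam ^ ((-q⁻¹:ℝ) + (m/q+1) + (-q⁻¹ * (q-1) + -q⁻¹ * m)) := by
            rw [mulpow, mulpow, mulpow]
        _ = lam ^ (0:ℝ) := by
            congr 1
            field_simp
            ring
        _ = 1 := Real.rpow_zero lam
    -- now the pointwise identity
    show b * (lam ^ (m/q+1)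
        * ((lam * q * (b*s) ^ (2*q-1) - q * (b*s) ^ (q-1)) * Real.exp (-(lam * (b*s) ^ q))
          * G (b*s)))
      = Ψ s * hfun (b * s)
    rw [hexp, ht2q, ht1q, hhfun]
    simp only []
    rw [htm, hΨ, ← mul_div_assoc,
      eq_div_iff (by positivity : (b ^ m * s ^ m : ℝ) ≠ 0)]
    simp only []
    linear_combination (q * s^(2*q-1) * s^m * Real.exp (-(s^q)) * G (b*s)) * c1
      - (q * s^(q-1) * s^m * Real.exp (-(s^q)) * G (b*s)) * c2
  -- dominated convergence
  have harg : ∀ s : ℝ, 0 < s →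
      Tendsto (fun lam : ℝ => lam ^ (-q⁻¹ : ℝ) * s) (𝓝[>] 0) atTop := by
    intro s hs0
    have h1 : Tendsto (fun lam : ℝ => lam ^ (q⁻¹ : ℝ)) (𝓝[>] 0) (𝓝[>] 0) := by
      refine tendsto_nhdsWithin_of_tendsto_nhds_of_eventually_within _ ?_ ?_
      · have hc : Tendsto (fun lam : ℝ => lam ^ (q⁻¹ : ℝ)) (𝓝 0) (𝓝 ((0:ℝ) ^ (q⁻¹:ℝ))) :=
          (Real.continuousAt_rpow_const 0 q⁻¹ (Or.inr (by positivity))).tendsto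
        rw [Real.zero_rpow (inv_ne_zero hq0')] at hc
        exact hc.mono_left nhdsWithin_le_nhds
      · filter_upwards [self_mem_nhdsWithin] with lam hlam
        exact Real.rpow_pos_of_pos hlam _
    have h2 : Tendsto (fun lam : ℝ => (lam ^ (q⁻¹ : ℝ))⁻¹) (𝓝[>] 0) atTop :=
      tendsto_inv_nhdsGT_zero.comp h1
    have h3 : Tendsto (fun lam : ℝ => lam ^ (-q⁻¹ : ℝ)) (𝓝[>] 0) atTop := by
      refine h2.congr' ?_
      filter_upwards [self_mem_nhdsWithin] with lam hlam
      rw [← Real.rpow_neg (le_of_lt hlam)]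
    exact h3.atTop_mul_const hs0
  have hmain : Tendsto
      (fun lam : ℝ => ∫ s in Set.Ioi 0, Ψ s * hfun (lam ^ (-q⁻¹ : ℝ) * s))
      (𝓝[>] 0) (𝓝 (∫ s in Set.Ioi 0, Ψ s * θ)) := by
    refine tendsto_integral_filter_of_dominated_convergence (fun s => |Ψ s| * C) ?_ ?_ ?_ ?_
    · filter_upwards [self_mem_nhdsWithin] with lam _
      exact (hΨmeas.mul (hfunmeas.comp (measurable_id.const_mul _))).aestronglyMeasurable
    · filter_upwards [self_mem_nhdsWithin] with lam hlam
      refine (ae_restrict_iff' measurableSet_Ioi).mpr (Filter.Eventually.of_forall ?_)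
      intro s hs
      have hs0 : (0:ℝ) < s := hs
      have hbs : (0:ℝ) < lam ^ (-q⁻¹ : ℝ) * s :=
        mul_pos (Real.rpow_pos_of_pos hlam _) hs0
      rw [Real.norm_eq_abs, abs_mul]
      refine mul_le_mul_of_nonneg_left ?_ (abs_nonneg _)
      rw [abs_of_nonneg (hfun_nonneg _ hbs)]
      exact hfun_le _ hbs
    · exact (hΨint.abs).mul_const C
    · refine (ae_restrict_iff' measurableSet_Ioi).mpr (Filter.Eventually.of_forall ?_)
      intro s hs
      exact tendsto_const_nhds.mul (hθ.comp (harg s hs))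
  -- compute the limiting integral
  have hθΨ : ∫ s in Set.Ioi (0:ℝ), Ψ s * θ = θ * (m / q) * Real.Gamma (m / q + 1) := by
    rw [integral_mul_const]
    have i1 : ∫ s in Set.Ioi (0:ℝ), s ^ (2*q-1+m) * Real.exp (-(s^q))
        = (1/q) * Real.Gamma ((2*q-1+m+1)/q) := by
      have := integral_rpow_mul_exp_neg_rpow hq0 (show (-1:ℝ) < 2*q-1+m by linarith)
      simpa using this
    have i2 : ∫ s in Set.Ioi (0:ℝ), s ^ (q-1+m) * Real.exp (-(s^q))
        = (1/q) * Real.Gamma ((q-1+m+1)/q) := by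
      have := integral_rpow_mul_exp_neg_rpow hq0 (show (-1:ℝ) < q-1+m by linarith)
      simpa using this
    have hsplit : ∫ s in Set.Ioi (0:ℝ), Ψ s
        = ∫ s in Set.Ioi (0:ℝ), (q * (s ^ (2*q-1+m) * Real.exp (-(s^q)))
            - q * (s ^ (q-1+m) * Real.exp (-(s^q)))) := by
      refine setIntegral_congr_fun measurableSet_Ioi (fun s hs => ?_)
      have hs0 : (0:ℝ) < s := hs
      rw [hΨ]
      simp only []
      rw [Real.rpow_add hs0, Real.rpow_add hs0]
      ring
    rw [hsplit, integral_sub ((i1int.const_mul q)) ((i2int.const_mul q)),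
      integral_const_mul, integral_const_mul, i1, i2]
    have e1 : (2*q-1+m+1)/q = m/q + 1 + 1 := by field_simp; ring
    have e2 : (q-1+m+1)/q = m/q + 1 := by field_simp; ring
    rw [e1, e2, Real.Gamma_add_one (by positivity : (m/q + 1 : ℝ) ≠ 0)]
    field_simp
    ring
  rw [← hθΨ]
  refine hmain.congr' ?_
  filter_upwards [self_mem_nhdsWithin] with lam hlam
  exact (key lam hlam).symm

end GaussianBubbleAux

/-- Asymptotics of the Gaussian-bubble integral `L₂` as `λ → 0⁺`
(second formula of Proposition 2.4(ii)). -/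
theorem gaussian_bubble_L2_asymptotics (n : ℕ) (hn : 2 ≤ n) (p : ℝ) (hp : 1 < p)
    (ν : Measure ℝ) (hνneg : ν (Set.Iio 0) = 0)
    (hmono : AntitoneOn (fun ρ : ℝ => (ν (Set.Icc 0 ρ)).toReal / ρ ^ n) (Set.Ioi 0))
    (hbound : ∀ ρ : ℝ, 0 < ρ → ν (Set.Icc 0 ρ) ≤ ENNReal.ofReal (ballVol n * ρ ^ n))
    (θ : ℝ)
    (hθ : Tendsto (fun ρ : ℝ => (ν (Set.Icc 0 ρ)).toReal / ρ ^ n) atTop (nhds θ)) :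
    Tendsto
      (fun lam : ℝ =>
        lam ^ ((n : ℝ) / (p / (p - 1)) + 1) *
          ∫ ρ, ρ ^ (p / (p - 1)) * Real.exp (-(lam * ρ ^ (p / (p - 1)))) ∂ν)
      (nhdsWithin 0 (Set.Ioi 0))
      (nhds (θ * ((n : ℝ) / (p / (p - 1))) * Real.Gamma ((n : ℝ) / (p / (p - 1)) + 1))) := by
  have hp1 : (0:ℝ) < p - 1 := by linarith
  have hq : 1 < p / (p - 1) := by
    rw [lt_div_iff₀ hp1]
    linarith
  have hm : (0:ℝ) < (n : ℝ) := by
    have : 0 < n := lt_of_lt_of_le two_pos hn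
    exact_mod_cast this
  have hballnn : 0 ≤ ballVol n := by
    have h1 : (0:ℝ) < Real.pi ^ ((n : ℝ) / 2) := Real.rpow_pos_of_pos Real.pi_pos _
    have h2 : (0:ℝ) < Real.Gamma ((n : ℝ) / 2 + 1) :=
      Real.Gamma_pos_of_pos (by positivity)
    exact (div_pos h1 h2).le
  have hIic : ∀ t : ℝ, 0 ≤ t → ν (Set.Iic t) = ν (Set.Icc 0 t) := by
    intro t ht
    refine le_antisymm ?_ (measure_mono (fun x hx => hx.2))
    have hsub : Set.Iic t ⊆ Set.Iio 0 ∪ Set.Icc 0 t := by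
      intro x hx
      by_cases h0 : 0 ≤ x
      · exact Or.inr ⟨h0, hx⟩
      · exact Or.inl (lt_of_not_ge h0)
    calc ν (Set.Iic t) ≤ ν (Set.Iio 0 ∪ Set.Icc 0 t) := measure_mono hsub
      _ ≤ ν (Set.Iio 0) + ν (Set.Icc 0 t) := measure_union_le _ _
      _ = ν (Set.Icc 0 t) := by rw [hνneg, zero_add]
  have hfin : ∀ t : ℝ, ν (Set.Iic t) ≠ ⊤ := by
    intro t
    have h1 : (0:ℝ) < max t 1 := lt_of_lt_of_le one_pos (le_max_right t 1)
    have h2 : ν (Set.Iic t) ≤ ν (Set.Iic (max t 1)) :=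
      measure_mono (Set.Iic_subset_Iic.mpr (le_max_left t 1))
    have h3 := (h2.trans_eq (hIic _ h1.le)).trans (hbound _ h1)
    exact ne_top_of_le_ne_top ENNReal.ofReal_ne_top h3
  have hGb : ∀ t : ℝ, 0 < t → (ν (Set.Iic t)).toReal ≤ ballVol n * t ^ ((n:ℕ) : ℝ) := by
    intro t ht
    rw [hIic t ht.le, Real.rpow_natCast]
    refine ENNReal.toReal_le_of_le_ofReal ?_ (hbound t ht)
    positivity
  have hθ' : Tendsto (fun x : ℝ => (ν (Set.Iic x)).toReal / x ^ ((n:ℕ) : ℝ)) atTop (𝓝 θ) := by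
    refine hθ.congr' ?_
    filter_upwards [eventually_gt_atTop (0:ℝ)] with x hx
    rw [hIic x hx.le, Real.rpow_natCast]
  haveI : IsLocallyFiniteMeasure ν :=
    ⟨fun x => ⟨Set.Iic (x + 1), Iic_mem_nhds (lt_add_one x), lt_top_iff_ne_top.mpr (hfin _)⟩⟩
  exact aux_main hq hm ν hνneg hfin hGb hθ'
end

section
/- Let n ≥ 2 be an integer and let s, t > 0 and r ∈ ℝ satisfy st > n + r > 0. Let ν be a Borel measure on [0,∞) such that the function ρ ↦ ν([0,ρ])/ρ^n is nonincreasing on (0,∞) and bounded above by ω_n, and let θ = lim_{ρ→∞} ν([0,ρ])/ρ^n. Then for every λ > 0 the integral K(λ) = ∫_{[0,∞)} ρ^r (λ + ρ^t)^{-s} dν(ρ) is finite, and lim_{λ→∞} λ^{s - (n+r)/t} K(λ) = (n/t) · θ · Γ((n+r)/t) Γ(s - (n+r)/t) / Γ(s). -/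
open Real MeasureTheory Filter Topology

open Set
open scoped ENNReal

lemma realBeta (a b : ℝ) (ha : 0 < a) (hb : 0 < b) :
    ∫ x in (0:ℝ)..1, x ^ (a-1) * (1-x) ^ (b-1) = Gamma a * Gamma b / Gamma (a+b) := by
  have hG : Complex.Gamma a * Complex.Gamma b = Complex.Gamma (a+b) * Complex.betaIntegral a b :=
    Complex.Gamma_mul_Gamma_eq_betaIntegral (by simpa using ha) (by simpa using hb)
  have hβ : Complex.betaIntegral (a:ℂ) (b:ℂ)
      = ((∫ x in (0:ℝ)..1, x ^ (a-1) * (1-x) ^ (b-1) : ℝ) : ℂ) := by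
    rw [Complex.betaIntegral, ← intervalIntegral.integral_ofReal]
    refine intervalIntegral.integral_congr fun x hx => ?_
    rw [uIcc_of_le (by norm_num : (0:ℝ) ≤ 1)] at hx
    obtain ⟨hx0, hx1⟩ := hx
    rw [Complex.ofReal_mul, Complex.ofReal_cpow hx0, Complex.ofReal_cpow (by linarith : (0:ℝ) ≤ 1 - x)]
    push_cast
    ring
  have hGne : Complex.Gamma (a+b) ≠ 0 := by
    rw [show ((a:ℂ)+b) = ((a+b:ℝ):ℂ) by push_cast; ring]
    rw [Complex.Gamma_ofReal]
    exact_mod_cast Real.Gamma_pos_of_pos (by linarith) |>.ne'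
  rw [hβ] at hG
  have : ((Gamma a * Gamma b : ℝ) : ℂ)
      = ((Gamma (a+b) * ∫ x in (0:ℝ)..1, x ^ (a-1) * (1-x) ^ (b-1) : ℝ) : ℂ) := by
    push_cast
    rw [← Complex.Gamma_ofReal, ← Complex.Gamma_ofReal, ← Complex.Gamma_ofReal]
    push_cast
    exact hG
  have h2 := Complex.ofReal_inj.mp this
  have hGpos : (0:ℝ) < Gamma (a+b) := Real.Gamma_pos_of_pos (by linarith)
  rw [h2]
  field_simp

lemma betaIoi (a b : ℝ) (ha : 0 < a) (hb : 0 < b) :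
    ∫ x in Ioi (0:ℝ), x ^ (a-1) * (1+x) ^ (-(a+b)) = Gamma a * Gamma b / Gamma (a+b) := by
  have himg : (fun u : ℝ => u / (1-u)) '' Ioo 0 1 = Ioi 0 := by
    ext y
    constructor
    · rintro ⟨u, ⟨hu0, hu1⟩, rfl⟩
      exact div_pos hu0 (by linarith)
    · intro hy
      have hy' : (0:ℝ) < y := hy
      have h1y : (1:ℝ) + y ≠ 0 := by linarith
      refine ⟨y / (1+y), ⟨div_pos hy' (by linarith), ?_⟩, ?_⟩
      · rw [div_lt_one (by linarith)]; linarith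
      · have h1 : 1 - y/(1+y) = 1/(1+y) := by field_simp; ring
        show y/(1+y) / (1 - y/(1+y)) = y
        rw [h1]
        field_simp
  have hderiv : ∀ u ∈ Ioo (0:ℝ) 1, HasDerivWithinAt (fun u : ℝ => u / (1-u))
      (((1-u)^2)⁻¹) (Ioo 0 1) u := by
    intro u ⟨hu0, hu1⟩
    have h1u : 1 - u ≠ 0 := by intro h; linarith [h]
    have := (hasDerivAt_id u).div ((hasDerivAt_id u).const_sub 1) h1u
    refine this.hasDerivWithinAt.congr_deriv ?_
    simp only [id]
    field_simp
    ring
  have hinj : InjOn (fun u : ℝ => u / (1-u)) (Ioo 0 1) := by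
    rintro u ⟨hu0, hu1⟩ v ⟨hv0, hv1⟩ h
    have h1u : (1:ℝ) - u ≠ 0 := by intro h'; linarith
    have h1v : (1:ℝ) - v ≠ 0 := by intro h'; linarith
    field_simp at h
    linarith
  have := integral_image_eq_integral_abs_deriv_smul measurableSet_Ioo hderiv hinj
    (fun x => x ^ (a-1) * (1+x) ^ (-(a+b)))
  rw [himg] at this
  rw [this]
  have heq : ∀ u ∈ Ioo (0:ℝ) 1,
      |((1-u)^2)⁻¹| • ((u/(1-u)) ^ (a-1) * (1+u/(1-u)) ^ (-(a+b)))
      = u ^ (a-1) * (1-u) ^ (b-1) := by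
    intro u ⟨hu0, hu1⟩
    have h1u : (0:ℝ) < 1 - u := by linarith
    have h2 : (1:ℝ) + u/(1-u) = (1-u)⁻¹ := by field_simp; ring
    have e1 : |((1-u)^2)⁻¹| = (1-u) ^ (-2 : ℝ) := by
      rw [abs_of_pos (by positivity), ← Real.rpow_natCast (1-u) 2, ← Real.rpow_neg h1u.le]
      norm_num
    have e2 : (u/(1-u)) ^ (a-1) = u^(a-1) * (1-u) ^ (-(a-1)) := by
      rw [Real.div_rpow hu0.le h1u.le, Real.rpow_neg h1u.le, div_eq_mul_inv]
    have e3 : (1 + u/(1-u)) ^ (-(a+b)) = (1-u) ^ (a+b) := by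
      rw [h2, ← Real.rpow_neg_one (1-u), ← Real.rpow_mul h1u.le]
      norm_num
    rw [smul_eq_mul, e1, e2, e3]
    have e4 : (1-u)^(-2:ℝ) * (u^(a-1) * (1-u)^(-(a-1)) * ((1-u)^(a+b)))
        = u^(a-1) * ((1-u)^(-2:ℝ) * (1-u)^(-(a-1)) * (1-u)^(a+b)) := by ring
    rw [e4, ← Real.rpow_add h1u, ← Real.rpow_add h1u]
    congr 1
    ring
  rw [setIntegral_congr_fun measurableSet_Ioo heq, ← integral_Ioc_eq_integral_Ioo,
    ← intervalIntegral.integral_of_le (by norm_num : (0:ℝ) ≤ 1), realBeta a b ha hb]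

lemma Jint (t c σ : ℝ) (ht : 0 < t) (hc : 0 < c) (hcσ : c < t * σ) :
    ∫ v in Ioi (0:ℝ), v ^ (c-1) * (1+v^t) ^ (-σ)
      = (1/t) * (Gamma (c/t) * Gamma (σ - c/t) / Gamma σ) := by
  have key := integral_comp_rpow_Ioi (fun x => x ^ (c/t-1) * (1+x) ^ (-σ)) ht.ne'
  have heq : ∀ v ∈ Ioi (0:ℝ),
      (|t| * v ^ (t-1)) • ((v^t) ^ (c/t-1) * (1+v^t) ^ (-σ))
      = t * (v ^ (c-1) * (1+v^t) ^ (-σ)) := by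
    intro v hv
    have hv0 : (0:ℝ) < v := hv
    rw [smul_eq_mul, abs_of_pos ht, ← Real.rpow_mul hv0.le]
    have : t * (c/t - 1) = c - t := by field_simp
    rw [this]
    rw [mul_assoc, ← mul_assoc (v ^ (t-1)), ← Real.rpow_add hv0]
    ring_nf
  rw [setIntegral_congr_fun measurableSet_Ioi heq] at key
  rw [integral_const_mul] at key
  have hb : 0 < σ - c/t := by
    rw [sub_pos, div_lt_iff₀ ht]
    linarith [mul_comm t σ]
  have := betaIoi (c/t) (σ - c/t) (by positivity) hb
  rw [show c/t + (σ - c/t) = σ by ring] at this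
  rw [this] at key
  rw [← key]
  field_simp

lemma kmeas (c σ lam t : ℝ) : Measurable (fun u : ℝ => u ^ c * (lam + u ^ t) ^ (-σ)) := by
  fun_prop

lemma key_integrable {t : ℝ} (ht : 0 < t) (c σ lam : ℝ) (hlam : 0 < lam)
    (hc : 0 < c) (hcσ : c < t * σ) :
    IntegrableOn (fun u : ℝ => u ^ (c-1) * (lam + u ^ t) ^ (-σ)) (Ioi 0) := by
  have hσ : 0 < σ := by nlinarith
  have hm := kmeas (c-1) σ lam t
  rw [← Ioc_union_Ioi_eq_Ioi (zero_le_one' ℝ)]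
  apply IntegrableOn.union
  · -- on Ioc 0 1
    have hint : IntegrableOn (fun u : ℝ => lam ^ (-σ) * u ^ (c-1)) (Ioc 0 1) := by
      apply Integrable.const_mul
      exact (intervalIntegrable_iff_integrableOn_Ioc_of_le (zero_le_one' ℝ)).mp
        (intervalIntegral.intervalIntegrable_rpow' (by linarith))
    apply Integrable.mono hint hm.aestronglyMeasurable.restrict
    rw [ae_restrict_iff' measurableSet_Ioc]
    filter_upwards with u hu
    obtain ⟨hu0, hu1⟩ := hu
    have hb : (0:ℝ) < lam + u ^ t := by nlinarith [rpow_pos_of_pos hu0 t]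
    have h1 : (lam + u ^ t) ^ (-σ) ≤ lam ^ (-σ) :=
      rpow_le_rpow_of_nonpos hlam (by linarith [rpow_pos_of_pos hu0 t]) (by linarith)
    rw [norm_of_nonneg (mul_nonneg (rpow_nonneg hu0.le _) (rpow_nonneg hb.le _)),
      norm_of_nonneg (mul_nonneg (rpow_nonneg hlam.le _) (rpow_nonneg hu0.le _)), mul_comm]
    exact mul_le_mul_of_nonneg_right h1 (rpow_nonneg hu0.le _)
  · -- on Ioi 1
    have hint : IntegrableOn (fun u : ℝ => u ^ (c-1-t*σ)) (Ioi 1) := by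
      rw [integrableOn_Ioi_rpow_iff zero_lt_one]
      linarith
    apply Integrable.mono hint hm.aestronglyMeasurable.restrict
    rw [ae_restrict_iff' measurableSet_Ioi]
    filter_upwards with u hu
    have hu0 : (0:ℝ) < u := lt_trans zero_lt_one hu
    have h1 : (lam + u ^ t) ^ (-σ) ≤ (u ^ t) ^ (-σ) :=
      rpow_le_rpow_of_nonpos (rpow_pos_of_pos hu0 t) (by linarith [rpow_pos_of_pos hu0 t]) (by linarith)
    have h2 : (u ^ t) ^ (-σ) = u ^ (-(t*σ)) := by
      rw [← Real.rpow_mul hu0.le, mul_neg]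
    have hb : (0:ℝ) < lam + u ^ t := by nlinarith [rpow_pos_of_pos hu0 t]
    rw [norm_of_nonneg (mul_nonneg (rpow_nonneg hu0.le _) (rpow_nonneg hb.le _)),
      norm_of_nonneg (rpow_nonneg hu0.le _)]
    calc u ^ (c-1) * (lam + u ^ t) ^ (-σ) ≤ u ^ (c-1) * u ^ (-(t*σ)) := by
          rw [← h2]; exact mul_le_mul_of_nonneg_left h1 (rpow_nonneg hu0.le _)
      _ = u ^ (c-1-t*σ) := by rw [← Real.rpow_add hu0]; ring_nf

lemma key_integrable' {t : ℝ} (ht : 0 < t) (c σ lam ρ : ℝ) (hσ : 0 < σ) (hlam : 0 < lam)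
    (hρ : 0 < ρ) (hcσ : c < t * σ) :
    IntegrableOn (fun u : ℝ => u ^ (c-1) * (lam + u ^ t) ^ (-σ)) (Ioi ρ) := by
  have hm := kmeas (c-1) σ lam t
  set M : ℝ := max ρ 1 with hM
  have hρM : ρ ≤ M := le_max_left _ _
  have h1M : (1:ℝ) ≤ M := le_max_right _ _
  rw [← Ioc_union_Ioi_eq_Ioi hρM]
  apply IntegrableOn.union
  · -- continuous on compact
    have hc1 : ContinuousOn (fun u : ℝ => u ^ (c-1) * (lam + u ^ t) ^ (-σ)) (Icc ρ M) := by
      intro x hx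
      have hx0 : (0:ℝ) < x := lt_of_lt_of_le hρ hx.1
      apply ContinuousWithinAt.mul
      · exact (Real.continuousAt_rpow_const x (c-1) (Or.inl hx0.ne')).continuousWithinAt
      · apply ContinuousWithinAt.rpow_const
        · exact (continuousAt_const.add
            (Real.continuousAt_rpow_const x t (Or.inl hx0.ne'))).continuousWithinAt
        · left
          have := rpow_pos_of_pos hx0 t
          intro h; nlinarith
    exact (hc1.integrableOn_Icc).mono_set Ioc_subset_Icc_self
  · -- Ioi M : reuse key_integrable on tail. bound by u^(c-1-tσ)
    have hint : IntegrableOn (fun u : ℝ => u ^ (c-1-t*σ)) (Ioi M) := by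
      rw [integrableOn_Ioi_rpow_iff (lt_of_lt_of_le zero_lt_one h1M)]
      linarith
    apply Integrable.mono hint hm.aestronglyMeasurable.restrict
    rw [ae_restrict_iff' measurableSet_Ioi]
    filter_upwards with u hu
    have hu0 : (0:ℝ) < u := lt_of_lt_of_le zero_lt_one (le_trans h1M (le_of_lt hu))
    have hb : (0:ℝ) < lam + u ^ t := by nlinarith [rpow_pos_of_pos hu0 t]
    have h1 : (lam + u ^ t) ^ (-σ) ≤ (u ^ t) ^ (-σ) :=
      rpow_le_rpow_of_nonpos (rpow_pos_of_pos hu0 t) (by linarith) (by linarith)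
    have h2 : (u ^ t) ^ (-σ) = u ^ (-(t*σ)) := by
      rw [← Real.rpow_mul hu0.le, mul_neg]
    rw [norm_of_nonneg (mul_nonneg (rpow_nonneg hu0.le _) (rpow_nonneg hb.le _)),
      norm_of_nonneg (rpow_nonneg hu0.le _)]
    calc u ^ (c-1) * (lam + u ^ t) ^ (-σ) ≤ u ^ (c-1) * u ^ (-(t*σ)) := by
          rw [← h2]; exact mul_le_mul_of_nonneg_left h1 (rpow_nonneg hu0.le _)
      _ = u ^ (c-1-t*σ) := by rw [← Real.rpow_add hu0]; ring_nf

lemma swap_lemma_s18 (ν : Measure ℝ) [SigmaFinite ν] (hIic : ν (Set.Iic 0) = 0)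
    (hfin : ∀ u : ℝ, ν (Set.Iio u) < ⊤)
    (w : ℝ → ℝ) (hw : Measurable w) (hwnn : ∀ u, 0 ≤ w u) (hw0 : ∀ u ≤ (0:ℝ), w u = 0)
    (hwint : ∀ ρ : ℝ, 0 < ρ → IntegrableOn w (Set.Ioi ρ))
    (hprod : Integrable (fun u => w u * (ν (Set.Iio u)).toReal) (volume.restrict (Set.Ioi 0))) :
    Integrable (fun ρ => ∫ u in Set.Ioi ρ, w u) ν ∧
    ∫ ρ, (∫ u in Set.Ioi ρ, w u) ∂ν = ∫ u in Set.Ioi 0, w u * (ν (Set.Iio u)).toReal := by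
  set f : ℝ → ℝ≥0∞ := fun u => ENNReal.ofReal (w u) with hf
  have hfm : Measurable f := hw.ennreal_ofReal
  set H : ℝ → ℝ≥0∞ := fun ρ => ∫⁻ u in Ioi ρ, f u with hH
  have hHanti : Antitone H := fun ρ1 ρ2 h => lintegral_mono_set (Ioi_subset_Ioi h)
  have hHmeas : Measurable H := hHanti.measurable
  have hmono' : Monotone (fun u : ℝ => ν (Iio u)) := fun a b h => measure_mono (Iio_subset_Iio h)
  have hνm : Measurable (fun u : ℝ => ν (Iio u)) := hmono'.measurable
  have hFm : Measurable (fun u : ℝ => (ν (Iio u)).toReal) := hνm.ennreal_toReal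
  have hh : ∀ ρ : ℝ, (∫ u in Ioi ρ, w u) = (H ρ).toReal := by
    intro ρ
    rw [integral_eq_lintegral_of_nonneg_ae (ae_of_all _ hwnn)
      hw.aestronglyMeasurable.restrict]
  have haepos : ∀ᵐ ρ ∂ν, 0 < ρ := by
    rw [ae_iff]
    refine measure_mono_null (fun x hx => ?_) hIic
    simpa using hx
  have hfinH : ∀ ρ : ℝ, 0 < ρ → H ρ < ⊤ := by
    intro ρ hρ
    have := (hwint ρ hρ).hasFiniteIntegral
    rw [hasFiniteIntegral_iff_norm] at this
    refine lt_of_le_of_lt (lintegral_mono fun u => ?_) this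
    exact ENNReal.ofReal_le_ofReal (le_abs_self _)
  -- the swap
  have hkey : ∫⁻ ρ, H ρ ∂ν = ∫⁻ u in Ioi 0, f u * ν (Iio u) := by
    have hswapm : AEMeasurable (Function.uncurry fun ρ u => (Ioi ρ).indicator f u)
        (ν.prod volume) := by
      have : (Function.uncurry fun ρ u => (Ioi ρ).indicator f u)
          = {p : ℝ × ℝ | p.1 < p.2}.indicator (fun p => f p.2) := by
        funext p
        by_cases h : p.1 < p.2 <;>
          simp [Function.uncurry, Set.indicator, h, mem_Ioi]
      rw [this]
      exact ((hfm.comp measurable_snd).indicator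
        (measurableSet_lt measurable_fst measurable_snd)).aemeasurable
    calc ∫⁻ ρ, H ρ ∂ν = ∫⁻ ρ, (∫⁻ u, (Ioi ρ).indicator f u) ∂ν := by
          simp_rw [lintegral_indicator measurableSet_Ioi]
          rfl
      _ = ∫⁻ u, (∫⁻ ρ, (Ioi ρ).indicator f u ∂ν) := lintegral_lintegral_swap hswapm
      _ = ∫⁻ u, f u * ν (Iio u) := by
          refine lintegral_congr fun u => ?_
          have : ∀ ρ : ℝ, (Ioi ρ).indicator f u = (Iio u).indicator (fun _ => f u) ρ := by
            intro ρ
            by_cases h : ρ < u <;> simp [Set.indicator, h, mem_Ioi, mem_Iio]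
          simp_rw [this]
          rw [lintegral_indicator measurableSet_Iio, setLIntegral_const]
      _ = ∫⁻ u in Ioi 0, f u * ν (Iio u) := by
          rw [← lintegral_indicator measurableSet_Ioi]
          refine lintegral_congr fun u => ?_
          by_cases h : (0:ℝ) < u
          · simp [Set.indicator, h]
          · push_neg at h
            simp [Set.indicator, h, hf, hw0 u h, not_lt.mpr h]
  have hkey2 : ∫⁻ ρ, ENNReal.ofReal ((H ρ).toReal) ∂ν
      = ∫⁻ u in Ioi 0, ENNReal.ofReal (w u * (ν (Iio u)).toReal) := by
    rw [lintegral_congr_ae (haepos.mono fun ρ hρ => by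
      rw [ENNReal.ofReal_toReal (hfinH ρ hρ).ne]), hkey]
    refine setLIntegral_congr_fun measurableSet_Ioi (fun u hu => ?_)
    rw [ENNReal.ofReal_mul (hwnn u), ENNReal.ofReal_toReal (hfin u).ne]
  have hfinal : ∫⁻ u in Ioi 0, ENNReal.ofReal (w u * (ν (Iio u)).toReal) < ⊤ := by
    have := hprod.hasFiniteIntegral
    rw [hasFiniteIntegral_iff_norm] at this
    refine lt_of_le_of_lt (lintegral_mono fun u => ?_) this
    exact ENNReal.ofReal_le_ofReal (le_abs_self _)
  have hint : Integrable (fun ρ => ∫ u in Set.Ioi ρ, w u) ν := by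
    constructor
    · simp_rw [hh]
      exact hHmeas.ennreal_toReal.aestronglyMeasurable
    · rw [hasFiniteIntegral_iff_norm]
      calc ∫⁻ ρ, ENNReal.ofReal ‖∫ u in Ioi ρ, w u‖ ∂ν
          = ∫⁻ ρ, ENNReal.ofReal ((H ρ).toReal) ∂ν := by
            refine lintegral_congr fun ρ => ?_
            rw [hh, norm_of_nonneg ENNReal.toReal_nonneg]
        _ < ⊤ := by rw [hkey2]; exact hfinal
  refine ⟨hint, ?_⟩
  rw [integral_eq_lintegral_of_nonneg_ae (ae_of_all _ fun ρ => by
      rw [hh]; exact ENNReal.toReal_nonneg) hint.1]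
  rw [integral_eq_lintegral_of_nonneg_ae (ae_of_all _ fun u =>
      mul_nonneg (hwnn u) ENNReal.toReal_nonneg) (hw.mul hFm).aestronglyMeasurable.restrict]
  congr 1
  rw [← hkey2]
  refine lintegral_congr fun ρ => ?_
  rw [hh]

lemma scaling_limit {t : ℝ} (ht : 0 < t) (c σ θC ω : ℝ) (n : ℕ) (hσ : 0 < σ)
    (hc : 0 < (n:ℝ) + c) (hcσ : (n:ℝ) + c < t * σ)
    (F : ℝ → ℝ) (hFm : Measurable F) (hFnn : ∀ u, 0 ≤ F u) (hωnn : 0 ≤ ω)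
    (hFle : ∀ u : ℝ, 0 < u → F u ≤ ω * u ^ n)
    (hFlim : Tendsto (fun u : ℝ => F u / u ^ n) atTop (𝓝 θC)) :
    Tendsto (fun lam : ℝ =>
        lam ^ (σ - ((n:ℝ)+c)/t) * ∫ u in Ioi (0:ℝ), u ^ (c-1) * (lam + u ^ t) ^ (-σ) * F u)
      atTop (𝓝 (θC * ∫ v in Ioi (0:ℝ), v ^ ((n:ℝ)+c-1) * (1+v^t) ^ (-σ))) := by
  set e : ℝ := σ - ((n:ℝ)+c)/t with he
  set G : ℝ → ℝ → ℝ := fun lam v =>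
    v ^ ((n:ℝ)+c-1) * (1+v^t) ^ (-σ) * (F (lam^(1/t) * v) / (lam^(1/t) * v) ^ n) with hG
  -- Step A : identity
  have hident : ∀ lam : ℝ, 0 < lam →
      lam ^ e * ∫ u in Ioi (0:ℝ), u ^ (c-1) * (lam + u ^ t) ^ (-σ) * F u
        = ∫ v in Ioi (0:ℝ), G lam v := by
    intro lam hlam
    set b : ℝ := lam ^ (1/t) with hbdef
    have hb : 0 < b := rpow_pos_of_pos hlam _
    have hbt : b ^ t = lam := by
      rw [hbdef, ← Real.rpow_mul hlam.le]
      rw [one_div, inv_mul_cancel₀ ht.ne', Real.rpow_one]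
    have hcv := integral_comp_mul_left_Ioi
      (fun u => u ^ (c-1) * (lam + u ^ t) ^ (-σ) * F u) 0 hb
    rw [mul_zero, smul_eq_mul] at hcv
    have hX : ∫ u in Ioi (0:ℝ), u ^ (c-1) * (lam + u ^ t) ^ (-σ) * F u
        = b * ∫ v in Ioi (0:ℝ), ((b*v) ^ (c-1) * (lam + (b*v) ^ t) ^ (-σ) * F (b*v)) := by
      rw [hcv, ← mul_assoc, mul_inv_cancel₀ hb.ne', one_mul]
    rw [hX, ← mul_assoc, ← integral_const_mul]
    refine setIntegral_congr_fun measurableSet_Ioi fun v hv => ?_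
    have hv0 : (0:ℝ) < v := hv
    have hbv : (0:ℝ) < b * v := mul_pos hb hv0
    have h1 : (b*v) ^ t = lam * v ^ t := by
      rw [Real.mul_rpow hb.le hv0.le, hbt]
    have hvt : (0:ℝ) < v ^ t := rpow_pos_of_pos hv0 t
    have h3 : (lam + (b*v)^t) ^ (-σ) = lam ^ (-σ) * (1+v^t) ^ (-σ) := by
      rw [h1, show lam + lam * v^t = lam * (1+v^t) by ring,
        Real.mul_rpow hlam.le (by linarith)]
    have h4 : ((b*v):ℝ) ^ (c-1) = b ^ (c-1) * v ^ (c-1) := Real.mul_rpow hb.le hv0.le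
    have hbvn : ((b*v):ℝ) ^ n ≠ 0 := pow_ne_zero _ hbv.ne'
    have h5 : F (b*v) = ((b*v):ℝ) ^ n * (F (b*v) / ((b*v):ℝ) ^ n) := by
      field_simp
    -- coefficient collapse
    have hbrn : (b:ℝ) ^ n = lam ^ ((n:ℝ)/t) := by
      rw [← Real.rpow_natCast b n, hbdef, ← Real.rpow_mul hlam.le]
      congr 1
      field_simp
    have hbc : b ^ (c-1) = lam ^ ((c-1)/t) := by
      rw [hbdef, ← Real.rpow_mul hlam.le]
      congr 1
      field_simp
    have hcoef : lam ^ e * b * (b ^ (c-1) * lam ^ (-σ) * (b:ℝ) ^ n) = 1 := by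
      rw [hbrn, hbc, hbdef, ← Real.rpow_add hlam, ← Real.rpow_add hlam, ← Real.rpow_add hlam,
        ← Real.rpow_add hlam]
      rw [show e + 1/t + ((c-1)/t + -σ + (n:ℝ)/t) = 0 by rw [he]; field_simp; ring,
        Real.rpow_zero]
    calc lam ^ e * b * ((b*v) ^ (c-1) * (lam + (b*v)^t) ^ (-σ) * F (b*v))
        = (lam ^ e * b * (b ^ (c-1) * lam ^ (-σ) * (b:ℝ) ^ n))
          * (v ^ (c-1) * ((v:ℝ) ^ n * ((1+v^t) ^ (-σ) * (F (b*v) / ((b*v):ℝ) ^ n)))) := by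
          rw [h4, h3]
          have hvn : ((v:ℝ)) ^ n ≠ 0 := pow_ne_zero _ hv0.ne'
          have hbn : ((b:ℝ)) ^ n ≠ 0 := pow_ne_zero _ hb.ne'
          rw [mul_pow b v n]
          field_simp
      _ = v ^ ((n:ℝ)+c-1) * (1+v^t) ^ (-σ) * (F (b*v) / ((b*v):ℝ) ^ n) := by
          rw [hcoef, one_mul,
            show ((n:ℝ)+c-1) = (c-1) + (n:ℝ) by ring,
            Real.rpow_add hv0, Real.rpow_natCast]
          ring
  -- Step B : dominated convergence
  have hbound : Integrable (fun v : ℝ => ω * (v ^ ((n:ℝ)+c-1) * (1+v^t) ^ (-σ)))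
      (volume.restrict (Ioi 0)) :=
    (key_integrable ht ((n:ℝ)+c) σ 1 one_pos hc hcσ).const_mul ω
  have hGm : ∀ lam : ℝ, AEStronglyMeasurable (G lam) (volume.restrict (Ioi 0)) := by
    intro lam
    apply Measurable.aestronglyMeasurable
    apply Measurable.mul
    · exact kmeas ((n:ℝ)+c-1) σ 1 t
    · exact ((hFm.comp (measurable_const_mul _)).div ((measurable_const_mul _).pow_const n))
  have hDCT : Tendsto (fun lam : ℝ => ∫ v in Ioi (0:ℝ), G lam v) atTop
      (𝓝 (∫ v in Ioi (0:ℝ), θC * (v ^ ((n:ℝ)+c-1) * (1+v^t) ^ (-σ)))) := by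
    apply tendsto_integral_filter_of_dominated_convergence
      (fun v : ℝ => ω * (v ^ ((n:ℝ)+c-1) * (1+v^t) ^ (-σ)))
    · exact Eventually.of_forall hGm
    · filter_upwards [eventually_ge_atTop (1:ℝ)] with lam hlam
      rw [ae_restrict_iff' measurableSet_Ioi]
      filter_upwards with v hv
      have hv0 : (0:ℝ) < v := hv
      have hlam0 : (0:ℝ) < lam := lt_of_lt_of_le zero_lt_one hlam
      have hb : (0:ℝ) < lam ^ (1/t) := rpow_pos_of_pos hlam0 _
      have hbv : (0:ℝ) < lam ^ (1/t) * v := mul_pos hb hv0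
      have hbvn : (0:ℝ) < (lam ^ (1/t) * v) ^ n := pow_pos hbv n
      have hvt : (0:ℝ) < v ^ t := rpow_pos_of_pos hv0 t
      have hratio : F (lam^(1/t) * v) / (lam^(1/t) * v) ^ n ≤ ω := by
        rw [div_le_iff₀ hbvn]
        exact hFle _ hbv
      have hrnn : 0 ≤ F (lam^(1/t) * v) / (lam^(1/t) * v) ^ n :=
        div_nonneg (hFnn _) hbvn.le
      have hker : (0:ℝ) ≤ v ^ ((n:ℝ)+c-1) * (1+v^t) ^ (-σ) :=
        mul_nonneg (rpow_nonneg hv0.le _) (rpow_nonneg (by linarith) _)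
      rw [hG]
      rw [norm_of_nonneg (mul_nonneg hker hrnn)]
      rw [mul_comm ω _]
      exact mul_le_mul_of_nonneg_left hratio hker
    · exact hbound
    · rw [ae_restrict_iff' measurableSet_Ioi]
      filter_upwards with v hv
      have hv0 : (0:ℝ) < v := hv
      have hcomp : Tendsto (fun lam : ℝ => lam ^ (1/t) * v) atTop atTop :=
        (tendsto_rpow_atTop (by positivity)).atTop_mul_const hv0
      have hlim : Tendsto (fun lam : ℝ => F (lam^(1/t) * v) / (lam^(1/t) * v) ^ n)
          atTop (𝓝 θC) := hFlim.comp hcomp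
      have := hlim.const_mul (v ^ ((n:ℝ)+c-1) * (1+v^t) ^ (-σ))
      simpa [hG, mul_comm, mul_assoc] using this
  have hfinal : ∫ v in Ioi (0:ℝ), θC * (v ^ ((n:ℝ)+c-1) * (1+v^t) ^ (-σ))
      = θC * ∫ v in Ioi (0:ℝ), v ^ ((n:ℝ)+c-1) * (1+v^t) ^ (-σ) := integral_const_mul _ _
  rw [← hfinal]
  apply hDCT.congr'
  filter_upwards [eventually_gt_atTop (0:ℝ)] with lam hlam
  exact (hident lam hlam).symm

lemma Ftilde_lim (ν : Measure ℝ) (n : ℕ) (ω θ : ℝ)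
    (hνneg : ν (Set.Iio 0) = 0)
    (hIic : ν (Set.Iic 0) = 0)
    (hfinIcc : ∀ ρ : ℝ, 0 < ρ → ν (Set.Icc 0 ρ) < ⊤)
    (hfinIio : ∀ u : ℝ, ν (Set.Iio u) < ⊤)
    (hθ : Tendsto (fun ρ : ℝ => (ν (Set.Icc 0 ρ)).toReal / ρ ^ n) atTop (𝓝 θ)) :
    Tendsto (fun u : ℝ => (ν (Set.Iio u)).toReal / u ^ n) atTop (𝓝 θ) := by
  have hup : ∀ w : ℝ, 0 < w → (ν (Set.Iio w)).toReal ≤ (ν (Set.Icc 0 w)).toReal := by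
    intro w hw
    apply ENNReal.toReal_mono (hfinIcc w hw).ne
    calc ν (Set.Iio w) ≤ ν (Set.Iic 0 ∪ Set.Icc 0 w) := by
          apply measure_mono
          intro x hx
          rcases le_or_gt x 0 with h | h
          · exact Or.inl h
          · exact Or.inr ⟨h.le, le_of_lt hx⟩
      _ ≤ ν (Set.Iic 0) + ν (Set.Icc 0 w) := measure_union_le _ _
      _ = ν (Set.Icc 0 w) := by rw [hIic, zero_add]
  have hlo : ∀ w : ℝ, 1 < w → (ν (Set.Icc 0 (w-1))).toReal ≤ (ν (Set.Iio w)).toReal := by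
    intro w hw
    apply ENNReal.toReal_mono (hfinIio w).ne
    apply measure_mono
    intro x hx
    exact lt_of_le_of_lt hx.2 (by linarith)
  -- lower tendsto
  have hsub : Tendsto (fun w : ℝ => w - 1) atTop atTop :=
    tendsto_atTop_add_const_right atTop (-1) tendsto_id
  have T1 : Tendsto (fun w : ℝ => (ν (Set.Icc 0 (w-1))).toReal / (w-1) ^ n) atTop (𝓝 θ) :=
    hθ.comp hsub
  have T2 : Tendsto (fun w : ℝ => ((w-1)/w) ^ n) atTop (𝓝 1) := by
    have h0 : Tendsto (fun w : ℝ => 1 - w⁻¹) atTop (𝓝 1) := by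
      simpa using tendsto_const_nhds.sub tendsto_inv_atTop_zero (f := fun _ : ℝ => (1:ℝ))
    have := h0.pow n
    rw [one_pow] at this
    apply this.congr'
    filter_upwards [eventually_gt_atTop (0:ℝ)] with w hw
    congr 1
    field_simp
  have Tlow : Tendsto (fun w : ℝ => (ν (Set.Icc 0 (w-1))).toReal / w ^ n) atTop (𝓝 θ) := by
    have := T1.mul T2
    rw [mul_one] at this
    apply this.congr'
    filter_upwards [eventually_gt_atTop (1:ℝ)] with w hw
    have hw1 : (0:ℝ) < w - 1 := by linarith
    have hw0 : (0:ℝ) < w := by linarith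
    rw [div_pow, div_mul_div_comm]
    rw [div_eq_div_iff (by positivity) (by positivity)]
    ring
  refine tendsto_of_tendsto_of_tendsto_of_le_of_le' Tlow (hθ) ?_ ?_
  · filter_upwards [eventually_gt_atTop (1:ℝ)] with w hw
    have hw0 : (0:ℝ) < w := by linarith
    exact (div_le_div_iff_of_pos_right (pow_pos hw0 n)).mpr (hlo w hw)
  · filter_upwards [eventually_gt_atTop (1:ℝ)] with w hw
    have hw0 : (0:ℝ) < w := by linarith
    exact (div_le_div_iff_of_pos_right (pow_pos hw0 n)).mpr (hup w hw0)

/-- Finiteness and asymptotics of the weighted Talentian-bubble functional `K(λ, r, t, s)`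
(Section 5). -/
theorem weighted_bubble_asymptotics (n : ℕ) (hn : 2 ≤ n) (s t r : ℝ) (hs : 0 < s)
    (ht : 0 < t) (hnr : 0 < (n : ℝ) + r) (hst : (n : ℝ) + r < s * t)
    (ν : Measure ℝ) (hνneg : ν (Set.Iio 0) = 0)
    (hmono : AntitoneOn (fun ρ : ℝ => (ν (Set.Icc 0 ρ)).toReal / ρ ^ n) (Set.Ioi 0))
    (hbound : ∀ ρ : ℝ, 0 < ρ → ν (Set.Icc 0 ρ) ≤ ENNReal.ofReal (ballVol n * ρ ^ n))
    (θ : ℝ)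
    (hθ : Tendsto (fun ρ : ℝ => (ν (Set.Icc 0 ρ)).toReal / ρ ^ n) atTop (nhds θ)) :
    (∀ lam : ℝ, 0 < lam → Integrable (fun ρ : ℝ => ρ ^ r * (lam + ρ ^ t) ^ (-s)) ν) ∧
      Tendsto
        (fun lam : ℝ =>
          lam ^ (s - ((n : ℝ) + r) / t) * ∫ ρ, ρ ^ r * (lam + ρ ^ t) ^ (-s) ∂ν)
        atTop
        (nhds (((n : ℝ) / t) * θ *
          (Real.Gamma (((n : ℝ) + r) / t) * Real.Gamma (s - ((n : ℝ) + r) / t) /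
            Real.Gamma s))) := by
  have hn0 : (0:ℝ) < n := by exact_mod_cast lt_of_lt_of_le zero_lt_two hn
  have hrts : r < t * s := by nlinarith
  have hnrts : (n:ℝ) + r < t * s := by nlinarith
  have hω : 0 < ballVol n := by
    unfold ballVol
    exact div_pos (rpow_pos_of_pos pi_pos _) (Gamma_pos_of_pos (by positivity))
  -- finiteness facts
  have hfinIcc : ∀ ρ : ℝ, 0 < ρ → ν (Set.Icc 0 ρ) < ⊤ := fun ρ hρ =>
    lt_of_le_of_lt (hbound ρ hρ) ENNReal.ofReal_lt_top
  have hzero : ν {(0:ℝ)} = 0 := by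
    have h1 : ∀ k : ℕ, ν {(0:ℝ)} ≤ ENNReal.ofReal (ballVol n * ((1:ℝ)/(k+1))^n) := by
      intro k
      refine le_trans (measure_mono ?_) (hbound _ (by positivity))
      intro x hx
      rw [Set.mem_singleton_iff] at hx
      subst hx
      exact ⟨le_refl 0, by positivity⟩
    have h2 : Tendsto (fun k : ℕ => ENNReal.ofReal (ballVol n * ((1:ℝ)/(k+1))^n)) atTop (𝓝 0) := by
      rw [show (0:ℝ≥0∞) = ENNReal.ofReal 0 by simp]
      apply ENNReal.tendsto_ofReal
      have h3 : Tendsto (fun k : ℕ => (1:ℝ)/(k+1)) atTop (𝓝 0) :=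
        tendsto_one_div_add_atTop_nhds_zero_nat
      have h4 := (h3.pow n).const_mul (ballVol n)
      rw [zero_pow (by omega : n ≠ 0), mul_zero] at h4
      exact h4
    exact le_antisymm (ge_of_tendsto' h2 h1) zero_le
  have hIic : ν (Set.Iic 0) = 0 := by
    have hset : Set.Iic (0:ℝ) = Set.Iio 0 ∪ {0} := by
      ext x; simp [le_iff_lt_or_eq]
    rw [hset]
    exact le_antisymm ((measure_union_le _ _).trans (by simp [hνneg, hzero])) zero_le
  have hfinIio : ∀ u : ℝ, ν (Set.Iio u) < ⊤ := by
    intro u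
    have hsub : Set.Iio u ⊆ Set.Iic 0 ∪ Set.Icc 0 (max u 1) := by
      intro x hx
      rcases le_or_gt x 0 with h | h
      · exact Or.inl h
      · exact Or.inr ⟨h.le, le_trans (le_of_lt hx) (le_max_left u 1)⟩
    calc ν (Set.Iio u) ≤ ν (Set.Iic 0) + ν (Set.Icc 0 (max u 1)) :=
          (measure_mono hsub).trans (measure_union_le _ _)
      _ < ⊤ := by
          rw [hIic, zero_add]
          exact hfinIcc _ (lt_of_lt_of_le zero_lt_one (le_max_right u 1))
  haveI hsf : SigmaFinite ν := by
    refine ⟨⟨⟨fun k => Set.Iio (k:ℝ), fun _ => trivial, fun k => hfinIio k, ?_⟩⟩⟩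
    ext x
    simp only [Set.mem_iUnion, Set.mem_Iio, Set.mem_univ, iff_true]
    obtain ⟨k, hk⟩ := exists_nat_gt x
    exact ⟨k, hk⟩
  set F : ℝ → ℝ := fun u => (ν (Set.Iio u)).toReal with hFdef
  have hmono' : Monotone (fun u : ℝ => ν (Set.Iio u)) :=
    fun a b h => measure_mono (Iio_subset_Iio h)
  have hFm : Measurable F := hmono'.measurable.ennreal_toReal
  have hFnn : ∀ u, 0 ≤ F u := fun u => ENNReal.toReal_nonneg
  have hFle : ∀ u : ℝ, 0 < u → F u ≤ ballVol n * u ^ n := by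
    intro u hu
    have hle : ν (Set.Iio u) ≤ ν (Set.Icc 0 u) := by
      calc ν (Set.Iio u) ≤ ν (Set.Iic 0 ∪ Set.Icc 0 u) := by
            apply measure_mono
            intro x hx
            rcases le_or_gt x 0 with h | h
            · exact Or.inl h
            · exact Or.inr ⟨h.le, le_of_lt hx⟩
        _ ≤ ν (Set.Iic 0) + ν (Set.Icc 0 u) := measure_union_le _ _
        _ = ν (Set.Icc 0 u) := by rw [hIic, zero_add]
    exact ENNReal.toReal_le_of_le_ofReal (by positivity) (le_trans hle (hbound u hu))
  have hFlim : Tendsto (fun u : ℝ => F u / u ^ n) atTop (𝓝 θ) :=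
    Ftilde_lim ν n (ballVol n) θ hνneg hIic hfinIcc hfinIio hθ
  -- kernels
  set w1 : ℝ → ℝ → ℝ := fun lam u => u ^ (r-1) * (lam + u^t) ^ (-s) with hw1def
  set w2 : ℝ → ℝ → ℝ := fun lam u => u ^ (t+r-1) * (lam + u^t) ^ (-(s+1)) with hw2def
  have hw1m : ∀ lam, Measurable (w1 lam) := fun lam => kmeas (r-1) s lam t
  have hw2m : ∀ lam, Measurable (w2 lam) := fun lam => kmeas (t+r-1) (s+1) lam t
  -- main identity for each lam > 0
  have main : ∀ lam : ℝ, 0 < lam →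
      Integrable (fun ρ : ℝ => ρ ^ r * (lam + ρ ^ t) ^ (-s)) ν ∧
      ∫ ρ, ρ ^ r * (lam + ρ ^ t) ^ (-s) ∂ν
        = (s*t) * (∫ u in Ioi (0:ℝ), w2 lam u * F u) - r * (∫ u in Ioi (0:ℝ), w1 lam u * F u) := by
    intro lam hlam
    set W1 : ℝ → ℝ := (Ioi (0:ℝ)).indicator (w1 lam) with hW1def
    set W2 : ℝ → ℝ := (Ioi (0:ℝ)).indicator (w2 lam) with hW2def
    have hbase : ∀ u : ℝ, 0 < u → (0:ℝ) < lam + u ^ t := by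
      intro u hu
      have := rpow_pos_of_pos hu t
      linarith
    have hw1nn : ∀ u : ℝ, 0 < u → 0 ≤ w1 lam u := fun u hu =>
      mul_nonneg (rpow_nonneg hu.le _) (rpow_nonneg (hbase u hu).le _)
    have hw2nn : ∀ u : ℝ, 0 < u → 0 ≤ w2 lam u := fun u hu =>
      mul_nonneg (rpow_nonneg hu.le _) (rpow_nonneg (hbase u hu).le _)
    have hW1nn : ∀ u, 0 ≤ W1 u := by
      intro u
      rw [hW1def]
      exact Set.indicator_nonneg (fun u hu => hw1nn u hu) u
    have hW2nn : ∀ u, 0 ≤ W2 u := by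
      intro u
      rw [hW2def]
      exact Set.indicator_nonneg (fun u hu => hw2nn u hu) u
    have hW1z : ∀ u ≤ (0:ℝ), W1 u = 0 := fun u hu =>
      Set.indicator_of_notMem (by simpa using hu) _
    have hW2z : ∀ u ≤ (0:ℝ), W2 u = 0 := fun u hu =>
      Set.indicator_of_notMem (by simpa using hu) _
    have hW1m : Measurable W1 := (hw1m lam).indicator measurableSet_Ioi
    have hW2m : Measurable W2 := (hw2m lam).indicator measurableSet_Ioi
    have hW1eq : ∀ ρ : ℝ, 0 ≤ ρ → ∀ u ∈ Ioi ρ, W1 u = w1 lam u := by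
      intro ρ hρ u hu
      exact Set.indicator_of_mem (lt_of_le_of_lt hρ hu) _
    have hW2eq : ∀ ρ : ℝ, 0 ≤ ρ → ∀ u ∈ Ioi ρ, W2 u = w2 lam u := by
      intro ρ hρ u hu
      exact Set.indicator_of_mem (lt_of_le_of_lt hρ hu) _
    have hw1int : ∀ ρ : ℝ, 0 < ρ → IntegrableOn (w1 lam) (Ioi ρ) :=
      fun ρ hρ => key_integrable' ht r s lam ρ hs hlam hρ hrts
    have hw2int : ∀ ρ : ℝ, 0 < ρ → IntegrableOn (w2 lam) (Ioi ρ) :=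
      fun ρ hρ => key_integrable' ht (t+r) (s+1) lam ρ (by linarith) hlam hρ (by nlinarith)
    have hW1int : ∀ ρ : ℝ, 0 < ρ → IntegrableOn W1 (Ioi ρ) := fun ρ hρ =>
      (hw1int ρ hρ).congr_fun (fun u hu => (hW1eq ρ hρ.le u hu).symm) measurableSet_Ioi
    have hW2int : ∀ ρ : ℝ, 0 < ρ → IntegrableOn W2 (Ioi ρ) := fun ρ hρ =>
      (hw2int ρ hρ).congr_fun (fun u hu => (hW2eq ρ hρ.le u hu).symm) measurableSet_Ioi
    -- products with F integrable
    have hprod : ∀ (c σ : ℝ), 0 < (n:ℝ) + c → (n:ℝ) + c < t * σ →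
        Integrable (fun u => (u ^ (c-1) * (lam + u^t) ^ (-σ)) * F u)
          (volume.restrict (Ioi 0)) := by
      intro c σ hc hcσ
      have hint : Integrable (fun u : ℝ => ballVol n * (u ^ ((n:ℝ)+c-1) * (lam + u^t) ^ (-σ)))
          (volume.restrict (Ioi 0)) :=
        (key_integrable ht ((n:ℝ)+c) σ lam hlam hc hcσ).const_mul _
      apply Integrable.mono hint
        (((kmeas (c-1) σ lam t).mul hFm).aestronglyMeasurable.restrict)
      rw [ae_restrict_iff' measurableSet_Ioi]
      filter_upwards with u hu
      have hu0 : (0:ℝ) < u := hu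
      have hb := hbase u hu0
      have h1 : (0:ℝ) ≤ u ^ (c-1) * (lam + u^t) ^ (-σ) :=
        mul_nonneg (rpow_nonneg hu0.le _) (rpow_nonneg hb.le _)
      simp only [Pi.mul_apply]
      rw [norm_of_nonneg (mul_nonneg h1 (hFnn u))]
      refine le_trans ?_ (le_abs_self _)
      calc u ^ (c-1) * (lam + u^t) ^ (-σ) * F u
          ≤ u ^ (c-1) * (lam + u^t) ^ (-σ) * (ballVol n * u ^ n) :=
            mul_le_mul_of_nonneg_left (hFle u hu0) h1
        _ = ballVol n * (u ^ ((n:ℝ)+c-1) * (lam + u^t) ^ (-σ)) := by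
            rw [show u ^ ((n:ℝ)+c-1) = u ^ (c-1) * u ^ (n:ℝ) by
              rw [← Real.rpow_add hu0]; congr 1; ring]
            rw [Real.rpow_natCast]
            ring
    have hprod1 : Integrable (fun u => W1 u * F u) (volume.restrict (Ioi 0)) := by
      apply (hprod r s hnr hnrts).congr
      rw [Filter.eventuallyEq_iff_exists_mem]
      refine ⟨Ioi 0, self_mem_ae_restrict measurableSet_Ioi, fun u hu => ?_⟩
      show u ^ (r-1) * (lam + u^t) ^ (-s) * F u = W1 u * F u
      rw [hW1eq 0 le_rfl u hu]
    have hprod2 : Integrable (fun u => W2 u * F u) (volume.restrict (Ioi 0)) := by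
      apply (hprod (t+r) (s+1) (by linarith) (by nlinarith)).congr
      rw [Filter.eventuallyEq_iff_exists_mem]
      refine ⟨Ioi 0, self_mem_ae_restrict measurableSet_Ioi, fun u hu => ?_⟩
      show u ^ ((t+r)-1) * (lam + u^t) ^ (-(s+1)) * F u = W2 u * F u
      rw [hW2eq 0 le_rfl u hu]
    obtain ⟨hint1, heq1⟩ := swap_lemma_s18 ν hIic hfinIio W1 hW1m hW1nn hW1z hW1int hprod1
    obtain ⟨hint2, heq2⟩ := swap_lemma_s18 ν hIic hfinIio W2 hW2m hW2nn hW2z hW2int hprod2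
    -- FTC
    have haepos : ∀ᵐ ρ ∂ν, 0 < ρ := by
      rw [ae_iff]
      refine measure_mono_null (fun x hx => ?_) hIic
      simpa using hx
    have hderiv : ∀ x : ℝ, 0 < x → HasDerivAt (fun u : ℝ => u ^ r * (lam + u ^ t) ^ (-s))
        (r * w1 lam x - (s*t) * w2 lam x) x := by
      intro x hx
      have hbx := hbase x hx
      have h1 : HasDerivAt (fun u : ℝ => u ^ r) (r * x ^ (r-1)) x :=
        Real.hasDerivAt_rpow_const (Or.inl hx.ne')
      have h2 : HasDerivAt (fun u : ℝ => lam + u ^ t) (t * x ^ (t-1)) x :=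
        (Real.hasDerivAt_rpow_const (Or.inl hx.ne')).const_add lam
      have h3 : HasDerivAt (fun u : ℝ => (lam + u ^ t) ^ (-s))
          (t * x ^ (t-1) * (-s) * (lam + x ^ t) ^ (-s-1)) x :=
        h2.rpow_const (p := -s) (Or.inl hbx.ne')
      have h4 := h1.mul h3
      refine h4.congr_deriv ?_
      rw [hw1def, hw2def]
      simp only []
      rw [show (-(s+1)) = -s-1 by ring]
      rw [show x ^ (t+r-1) = x ^ r * x ^ (t-1) by
        rw [← Real.rpow_add hx]; congr 1; ring]
      ring
    have htend : Tendsto (fun u : ℝ => u ^ r * (lam + u ^ t) ^ (-s)) atTop (𝓝 0) := by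
      have hub : ∀ᶠ u in atTop, ‖u ^ r * (lam + u ^ t) ^ (-s)‖ ≤ u ^ (r - t*s) := by
        filter_upwards [eventually_ge_atTop (1:ℝ)] with u hu
        have hu0 : (0:ℝ) < u := lt_of_lt_of_le zero_lt_one hu
        have hb := hbase u hu0
        have hut : (0:ℝ) < u ^ t := rpow_pos_of_pos hu0 t
        rw [norm_of_nonneg (mul_nonneg (rpow_nonneg hu0.le _) (rpow_nonneg hb.le _))]
        calc u ^ r * (lam + u ^ t) ^ (-s) ≤ u ^ r * (u ^ t) ^ (-s) := by
              apply mul_le_mul_of_nonneg_left _ (rpow_nonneg hu0.le _)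
              exact rpow_le_rpow_of_nonpos hut (by linarith) (by linarith)
          _ = u ^ (r - t*s) := by
              rw [← Real.rpow_mul hu0.le, ← Real.rpow_add hu0]
              congr 1; ring
      have hto : Tendsto (fun u : ℝ => u ^ (r - t*s)) atTop (𝓝 0) := by
        have := tendsto_rpow_neg_atTop (y := t*s - r) (by linarith)
        simpa [show -(t*s-r) = r - t*s from by ring] using this
      apply squeeze_zero_norm' hub hto
    have hfun : ∀ᵐ ρ ∂ν, ρ ^ r * (lam + ρ ^ t) ^ (-s)
        = (s*t) * (∫ u in Ioi ρ, W2 u) - r * (∫ u in Ioi ρ, W1 u) := by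
      filter_upwards [haepos] with ρ hρ
      have hW1i : ∫ u in Ioi ρ, W1 u = ∫ u in Ioi ρ, w1 lam u :=
        setIntegral_congr_fun measurableSet_Ioi (fun u hu => hW1eq ρ hρ.le u hu)
      have hW2i : ∫ u in Ioi ρ, W2 u = ∫ u in Ioi ρ, w2 lam u :=
        setIntegral_congr_fun measurableSet_Ioi (fun u hu => hW2eq ρ hρ.le u hu)
      have hdint : IntegrableOn (fun x => r * w1 lam x - (s*t) * w2 lam x) (Ioi ρ) :=
        ((hw1int ρ hρ).const_mul r).sub ((hw2int ρ hρ).const_mul (s*t))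
      have hftc := integral_Ioi_of_hasDerivAt_of_tendsto
        ((hderiv ρ hρ).continuousAt.continuousWithinAt)
        (fun x hx => hderiv x (lt_trans hρ hx)) hdint htend
      rw [integral_sub ((hw1int ρ hρ).const_mul r) ((hw2int ρ hρ).const_mul (s*t)),
        integral_const_mul, integral_const_mul] at hftc
      rw [hW1i, hW2i]
      linarith [hftc]
    have hint : Integrable (fun ρ : ℝ => ρ ^ r * (lam + ρ ^ t) ^ (-s)) ν := by
      apply Integrable.congr ((hint2.const_mul (s*t)).sub (hint1.const_mul r))
      filter_upwards [hfun] with ρ hρ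
      exact hρ.symm
    have e1' : ∫ u in Ioi (0:ℝ), W1 u * F u = ∫ u in Ioi (0:ℝ), w1 lam u * F u := by
      refine setIntegral_congr_fun measurableSet_Ioi (fun u hu => ?_)
      show W1 u * F u = w1 lam u * F u
      rw [hW1eq 0 le_rfl u hu]
    have e2' : ∫ u in Ioi (0:ℝ), W2 u * F u = ∫ u in Ioi (0:ℝ), w2 lam u * F u := by
      refine setIntegral_congr_fun measurableSet_Ioi (fun u hu => ?_)
      show W2 u * F u = w2 lam u * F u
      rw [hW2eq 0 le_rfl u hu]
    have heq1' : ∫ ρ, (∫ u in Ioi ρ, W1 u) ∂ν = ∫ u in Ioi (0:ℝ), w1 lam u * F u :=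
      heq1.trans e1'
    have heq2' : ∫ ρ, (∫ u in Ioi ρ, W2 u) ∂ν = ∫ u in Ioi (0:ℝ), w2 lam u * F u :=
      heq2.trans e2'
    refine ⟨hint, ?_⟩
    rw [integral_congr_ae hfun, integral_sub (hint2.const_mul (s*t)) (hint1.const_mul r),
      integral_const_mul, integral_const_mul, heq1', heq2']
  refine ⟨fun lam hlam => (main lam hlam).1, ?_⟩
  have lim1 := scaling_limit ht r s θ (ballVol n) n hs hnr hnrts F hFm hFnn hω.le hFle hFlim
  have lim2 := scaling_limit ht (t+r) (s+1) θ (ballVol n) n (by linarith)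
    (by linarith) (by nlinarith) F hFm hFnn hω.le hFle hFlim
  rw [show (s+1) - ((n:ℝ)+(t+r))/t = s - ((n:ℝ)+r)/t by field_simp; ring] at lim2
  have comb := (lim2.const_mul (s*t)).sub (lim1.const_mul r)
  have heqfun : (fun lam : ℝ => (s*t) * (lam ^ (s - ((n:ℝ)+r)/t) *
        ∫ u in Ioi (0:ℝ), u ^ ((t+r)-1) * (lam + u ^ t) ^ (-(s+1)) * F u)
      - r * (lam ^ (s - ((n:ℝ)+r)/t) *
        ∫ u in Ioi (0:ℝ), u ^ (r-1) * (lam + u ^ t) ^ (-s) * F u))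
      =ᶠ[atTop] (fun lam : ℝ =>
        lam ^ (s - ((n : ℝ) + r) / t) * ∫ ρ, ρ ^ r * (lam + ρ ^ t) ^ (-s) ∂ν) := by
    filter_upwards [eventually_gt_atTop (0:ℝ)] with lam hlam
    rw [(main lam hlam).2]
    show (s*t) * (lam ^ (s - ((n:ℝ)+r)/t) * ∫ u in Ioi (0:ℝ), w2 lam u * F u)
      - r * (lam ^ (s - ((n:ℝ)+r)/t) * ∫ u in Ioi (0:ℝ), w1 lam u * F u)
      = lam ^ (s - ((n:ℝ)+r)/t) *
        ((s*t) * (∫ u in Ioi (0:ℝ), w2 lam u * F u) - r * (∫ u in Ioi (0:ℝ), w1 lam u * F u))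
    ring
  have final := comb.congr' heqfun
  have hconst : s * t * (θ * ∫ v in Ioi (0:ℝ), v ^ ((n:ℝ) + (t + r) - 1) * (1 + v ^ t) ^ (-(s+1)))
      - r * (θ * ∫ v in Ioi (0:ℝ), v ^ ((n:ℝ) + r - 1) * (1 + v ^ t) ^ (-s))
      = ((n:ℝ)/t) * θ *
        (Real.Gamma (((n:ℝ)+r)/t) * Real.Gamma (s - ((n:ℝ)+r)/t) / Real.Gamma s) := by
    rw [Jint t ((n:ℝ)+(t+r)) (s+1) ht (by linarith) (by nlinarith),
      Jint t ((n:ℝ)+r) s ht hnr hnrts]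
    rw [show ((n:ℝ)+(t+r))/t = ((n:ℝ)+r)/t + 1 from by field_simp; ring]
    rw [show s + 1 - (((n:ℝ)+r)/t + 1) = s - ((n:ℝ)+r)/t from by ring]
    rw [Real.Gamma_add_one (ne_of_gt (div_pos hnr ht)), Real.Gamma_add_one hs.ne']
    have hΓs : Real.Gamma s ≠ 0 := (Gamma_pos_of_pos hs).ne'
    field_simp
    ring
  exact hconst ▸ final
end
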